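/- arXiv:math/0601109 — 4 statements merged into one kernel-verified Lean document; each statement's English description precedes it below -/
import Mathlib

section
/- Let F(z) = a_d z^d + a_{d-1} z^{d-1} + ... + a_0 be a complex polynomial of degree d ≥ 1 (so a_d ≠ 0), viewed as a map F : ℂ → ℂ, and let E ⊆ ℂ be a bounded set. Then d_∞(F⁻¹(E)) = |a_d|^{-1/d} · d_∞(E)^{1/d}. -/
open Polynomial Filter Finset Matrix


/-- The Fekete–Leja transfinite diameter of a set `E ⊆ ℂ` (the case `N = 1`):
`d_∞(E) = limsup_n d_n(E)`, where
`d_n(E) = (sup over n+1 points ζ_0, …, ζ_n of E of ∏_{i<j} |ζ_i − ζ_j|)^{2/(n(n+1))}`. -/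
noncomputable def transfiniteDiameter1 (E : Set ℂ) : ℝ :=
  Filter.limsup (fun n : ℕ =>
    (sSup {x : ℝ | ∃ ζ : Fin (n + 1) → ℂ, (∀ i, ζ i ∈ E) ∧
        x = ∏ p ∈ Finset.univ.filter (fun p : Fin (n + 1) × Fin (n + 1) => p.1 < p.2),
              ‖ζ p.1 - ζ p.2‖})
      ^ ((2 : ℝ) / ((n * (n + 1) : ℕ) : ℝ)))
    Filter.atTop


noncomputable def supNorm (E : Set ℂ) (p : ℂ[X]) : ℝ :=
  sSup ((fun z => ‖p.eval z‖) '' E)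

lemma bddAbove_image_abs_eval {E : Set ℂ} (hE : Bornology.IsBounded E) (p : ℂ[X]) :
    BddAbove ((fun z => ‖p.eval z‖) '' E) := by
  obtain ⟨R, hR⟩ := hE.subset_closedBall 0
  have hcomp : IsCompact (Metric.closedBall (0:ℂ) R) := isCompact_closedBall _ _
  have hcont : Continuous fun z : ℂ => ‖p.eval z‖ :=
    (continuous_norm).comp p.continuous
  exact (hcomp.bddAbove_image hcont.continuousOn).mono (Set.image_mono hR)

lemma supNorm_nonneg {E : Set ℂ} (hE : Bornology.IsBounded E) (p : ℂ[X]) :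
    0 ≤ supNorm E p := by
  rcases E.eq_empty_or_nonempty with h | ⟨z, hz⟩
  · simp [_root_.supNorm, h, Real.sSup_empty]
  · exact le_trans (norm_nonneg _)
      (le_csSup (bddAbove_image_abs_eval hE p) ⟨z, hz, rfl⟩)

lemma abs_eval_le_supNorm {E : Set ℂ} (hE : Bornology.IsBounded E) (p : ℂ[X])
    {z : ℂ} (hz : z ∈ E) : ‖p.eval z‖ ≤ supNorm E p :=
  le_csSup (bddAbove_image_abs_eval hE p) ⟨z, hz, rfl⟩

lemma supNorm_le {E : Set ℂ} {p : ℂ[X]} {a : ℝ} (ha : 0 ≤ a)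
    (h : ∀ z ∈ E, ‖p.eval z‖ ≤ a) : supNorm E p ≤ a :=
  Real.sSup_le (by rintro x ⟨z, hz, rfl⟩; exact h z hz) ha

lemma supNorm_mul_le {E : Set ℂ} (hE : Bornology.IsBounded E) (p q : ℂ[X]) :
    supNorm E (p * q) ≤ supNorm E p * supNorm E q := by
  refine supNorm_le (mul_nonneg (supNorm_nonneg hE p) (supNorm_nonneg hE q)) fun z hz => ?_
  rw [eval_mul, norm_mul]
  exact mul_le_mul (abs_eval_le_supNorm hE p hz) (abs_eval_le_supNorm hE q hz)
    (norm_nonneg _) (supNorm_nonneg hE p)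

lemma supNorm_pow_le {E : Set ℂ} (hE : Bornology.IsBounded E) (p : ℂ[X]) (j : ℕ) :
    supNorm E (p ^ j) ≤ supNorm E p ^ j := by
  induction j with
  | zero => simpa using supNorm_le zero_le_one (fun z hz => by simp)
  | succ j ih =>
      calc supNorm E (p ^ (j+1)) = supNorm E (p ^ j * p) := by ring_nf
        _ ≤ supNorm E (p ^ j) * supNorm E p := supNorm_mul_le hE _ _
        _ ≤ supNorm E p ^ j * supNorm E p :=
            mul_le_mul_of_nonneg_right ih (supNorm_nonneg hE p)
        _ = supNorm E p ^ (j+1) := by ring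

noncomputable def chebSet (E : Set ℂ) : Set ℝ :=
  {x : ℝ | ∃ p : ℂ[X], p.Monic ∧ 1 ≤ p.natDegree ∧
      x = supNorm E p ^ ((1 : ℝ) / (p.natDegree : ℝ))}

noncomputable def cheb (E : Set ℂ) : ℝ := sInf (chebSet E)

lemma chebSet_nonempty (E : Set ℂ) : (chebSet E).Nonempty :=
  ⟨_, X, monic_X, by simp, rfl⟩

lemma chebSet_nonneg {E : Set ℂ} (hE : Bornology.IsBounded E) {x : ℝ} (hx : x ∈ chebSet E) :
    0 ≤ x := by
  obtain ⟨p, _, _, rfl⟩ := hx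
  exact Real.rpow_nonneg (supNorm_nonneg hE p) _

lemma chebSet_bddBelow {E : Set ℂ} (hE : Bornology.IsBounded E) : BddBelow (chebSet E) :=
  ⟨0, fun x hx => chebSet_nonneg hE hx⟩

lemma cheb_nonneg {E : Set ℂ} (hE : Bornology.IsBounded E) : 0 ≤ cheb E :=
  le_csInf (chebSet_nonempty E) (fun x hx => chebSet_nonneg hE hx)

lemma cheb_le {E : Set ℂ} (hE : Bornology.IsBounded E) {p : ℂ[X]} (hp : p.Monic)
    (hd : 1 ≤ p.natDegree) : cheb E ≤ supNorm E p ^ ((1 : ℝ) / (p.natDegree : ℝ)) :=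
  csInf_le (chebSet_bddBelow hE) ⟨p, hp, hd, rfl⟩

lemma cheb_pow_le {E : Set ℂ} (hE : Bornology.IsBounded E) {p : ℂ[X]} (hp : p.Monic)
    (hd : 1 ≤ p.natDegree) : cheb E ^ p.natDegree ≤ supNorm E p := by
  have h := cheb_le hE hp hd
  have hd0 : (p.natDegree : ℝ) ≠ 0 := Nat.cast_ne_zero.2 (by omega)
  have := pow_le_pow_left₀ (cheb_nonneg hE) h p.natDegree
  rwa [← Real.rpow_natCast (supNorm E p ^ ((1:ℝ)/(p.natDegree:ℝ))) p.natDegree,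
    ← Real.rpow_mul (supNorm_nonneg hE p), one_div_mul_cancel hd0, Real.rpow_one] at this

noncomputable def vprodF (n : ℕ) (ζ : Fin n → ℂ) : ℝ :=
  ∏ p ∈ Finset.univ.filter (fun p : Fin n × Fin n => p.1 < p.2),
    ‖ζ p.1 - ζ p.2‖

lemma vprodF_nonneg (n : ℕ) (ζ : Fin n → ℂ) : 0 ≤ vprodF n ζ :=
  Finset.prod_nonneg fun _ _ => norm_nonneg _

lemma vprodF_snoc (n : ℕ) (ζ : Fin n → ℂ) (z : ℂ) :
    vprodF (n + 1) (Fin.snoc ζ z) =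
      (∏ i : Fin n, ‖z - ζ i‖) * vprodF n ζ := by
  classical
  unfold vprodF
  rw [← Finset.prod_filter_mul_prod_filter_not
    (Finset.univ.filter (fun p : Fin (n+1) × Fin (n+1) => p.1 < p.2))
    (fun p => p.2 = Fin.last n)]
  congr 1
  · -- pairs (i, last)
    refine (Finset.prod_bij (fun (a : Fin n) _ => ((Fin.castSucc a, Fin.last n) : Fin (n+1) × Fin (n+1))) ?_ ?_ ?_ ?_).symm
    · intro a _
      simp [Fin.castSucc_lt_last]
    · intro a _ b _ h
      simpa [Prod.ext_iff, Fin.castSucc_inj] using h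
    · rintro ⟨p1, p2⟩ hp
      simp only [Finset.mem_filter, Finset.mem_univ, true_and] at hp
      obtain ⟨hlt, h2⟩ := hp
      subst h2
      have h1 : (p1 : ℕ) < n := by
        simpa [Fin.lt_iff_val_lt_val] using hlt
      exact ⟨⟨p1, h1⟩, Finset.mem_univ _, by simp [Prod.ext_iff, Fin.ext_iff]⟩
    · intro a _
      simp only [Fin.snoc_castSucc, Fin.snoc_last]
      rw [← norm_sub_rev]
  · -- pairs (i, j), j ≠ last
    refine (Finset.prod_bij
      (fun (a : Fin n × Fin n) _ => ((Fin.castSucc a.1, Fin.castSucc a.2) : Fin (n+1) × Fin (n+1))) ?_ ?_ ?_ ?_).symm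
    · intro a ha
      simp only [Finset.mem_filter, Finset.mem_univ, true_and] at ha ⊢
      refine ⟨by simpa [Fin.castSucc_lt_castSucc_iff] using ha, ?_⟩
      exact Fin.ne_of_lt (Fin.castSucc_lt_last _)
    · intro a _ b _ h
      simpa [Prod.ext_iff, Fin.castSucc_inj] using h
    · rintro ⟨p1, p2⟩ hp
      simp only [Finset.mem_filter, Finset.mem_univ, true_and] at hp
      obtain ⟨hlt, h2⟩ := hp
      have hp2 : (p2 : ℕ) < n := by
        have h3 := Fin.lt_last_iff_ne_last.2 h2
        exact h3
      have hp1 : (p1 : ℕ) < n := lt_trans hlt hp2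
      refine ⟨(⟨p1, hp1⟩, ⟨p2, hp2⟩), ?_, by simp [Prod.ext_iff, Fin.ext_iff]⟩
      simp only [Finset.mem_filter, Finset.mem_univ, true_and]
      exact hlt
    · intro a _
      simp [Fin.snoc_castSucc]

lemma vprodF_le {n : ℕ} {R : ℝ} {ζ : Fin n → ℂ} (hζ : ∀ i, ζ i ∈ Metric.closedBall (0:ℂ) R) :
    vprodF n ζ ≤ (max 1 (2 * R)) ^ (n * n) := by
  set M := max 1 (2 * R) with hM
  have hM1 : (1:ℝ) ≤ M := le_max_left _ _
  have hfac : ∀ p : Fin n × Fin n, ‖ζ p.1 - ζ p.2‖ ≤ M := by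
    intro p
    have h1 := hζ p.1
    have h2 := hζ p.2
    simp only [Metric.mem_closedBall, Complex.dist_eq, sub_zero] at h1 h2
    calc ‖ζ p.1 - ζ p.2‖ ≤ ‖ζ p.1‖ + ‖ζ p.2‖ :=
          norm_sub_le _ _
      _ ≤ R + R := add_le_add h1 h2
      _ = 2 * R := by ring
      _ ≤ M := le_max_right _ _
  calc vprodF n ζ ≤ ∏ _p ∈ Finset.univ.filter (fun p : Fin n × Fin n => p.1 < p.2), M :=
        Finset.prod_le_prod (fun _ _ => norm_nonneg _) (fun p _ => hfac p)
    _ = M ^ (Finset.univ.filter (fun p : Fin n × Fin n => p.1 < p.2)).card :=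
        Finset.prod_const M
    _ ≤ M ^ (n * n) := by
        apply pow_le_pow_right₀ hM1
        calc (Finset.univ.filter (fun p : Fin n × Fin n => p.1 < p.2)).card
            ≤ (Finset.univ : Finset (Fin n × Fin n)).card := Finset.card_filter_le _ _
          _ = n * n := by simp

noncomputable def vset (E : Set ℂ) (n : ℕ) : Set ℝ :=
  {x : ℝ | ∃ ζ : Fin (n + 1) → ℂ, (∀ i, ζ i ∈ E) ∧ x = vprodF (n + 1) ζ}
noncomputable def vsup (E : Set ℂ) (n : ℕ) : ℝ := sSup (vset E n)


noncomputable def dseq (E : Set ℂ) (n : ℕ) : ℝ :=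
  vsup E n ^ ((2 : ℝ) / ((n * (n + 1) : ℕ) : ℝ))


lemma vset_bddAbove {E : Set ℂ} (hE : Bornology.IsBounded E) (n : ℕ) :
    BddAbove (vset E n) := by
  obtain ⟨R, hR⟩ := hE.subset_closedBall 0
  refine ⟨(max 1 (2*R)) ^ ((n+1)*(n+1)), ?_⟩
  rintro x ⟨ζ, hζ, rfl⟩
  exact vprodF_le (fun i => hR (hζ i))

lemma vsup_nonneg {E : Set ℂ} (hE : Bornology.IsBounded E) (n : ℕ) : 0 ≤ vsup E n := by
  rcases E.eq_empty_or_nonempty with h | ⟨z, hz⟩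
  · have : vset E n = ∅ := by
      ext x; simp only [vset, Set.mem_setOf_eq, Set.mem_empty_iff_false, iff_false]
      rintro ⟨ζ, hζ, -⟩
      exact absurd (hζ 0) (by simp [h])
    simp [vsup, this, Real.sSup_empty]
  · exact le_trans (vprodF_nonneg _ _)
      (le_csSup (vset_bddAbove hE n) ⟨fun _ => z, fun _ => hz, rfl⟩)

/-- the polynomial with roots at the ζ i -/
lemma abs_eval_prod_X_sub_C {n : ℕ} (ζ : Fin n → ℂ) (z : ℂ) :
    ‖(∏ i : Fin n, (X - C (ζ i))).eval z‖ = ∏ i : Fin n, ‖z - ζ i‖ := by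
  rw [eval_prod, norm_prod]
  simp

lemma vsup_succ_ge {E : Set ℂ} (hE : Bornology.IsBounded E) (hne : E.Nonempty) (n : ℕ) :
    cheb E ^ (n + 1) * vsup E n ≤ vsup E (n + 1) := by
  have hc : 0 ≤ cheb E := cheb_nonneg hE
  rcases eq_or_lt_of_le (pow_nonneg hc (n+1)) with h0 | hpos
  · calc cheb E ^ (n+1) * vsup E n = 0 := by rw [← h0]; ring
      _ ≤ vsup E (n+1) := vsup_nonneg hE _
  have key : ∀ x ∈ vset E n, cheb E ^ (n+1) * x ≤ vsup E (n+1) := by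
    rintro x ⟨ζ, hζ, rfl⟩
    set q : ℂ[X] := ∏ i : Fin (n+1), (X - C (ζ i)) with hq
    have hqm : q.Monic := monic_prod_of_monic _ _ (fun i _ => monic_X_sub_C _)
    have hqd : q.natDegree = n + 1 := by
      rw [hq, natDegree_prod_of_monic _ _ (fun i _ => monic_X_sub_C _)]
      simp [natDegree_X_sub_C]
    have hch : cheb E ^ (n + 1) ≤ supNorm E q := by
      have := cheb_pow_le hE hqm (by omega)
      rwa [hqd] at this
    -- for every z ∈ E, |q z| * vprodF ζ ∈ vset E (n+1)
    have hmem : ∀ z ∈ E, ‖q.eval z‖ * vprodF (n+1) ζ ≤ vsup E (n+1) := by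
      intro z hz
      have : ‖q.eval z‖ * vprodF (n+1) ζ ∈ vset E (n+1) := by
        refine ⟨Fin.snoc ζ z, ?_, ?_⟩
        · intro i
          refine Fin.lastCases ?_ ?_ i
          · simpa using hz
          · intro j; simpa using hζ j
        · rw [vprodF_snoc, abs_eval_prod_X_sub_C]
      exact le_csSup (vset_bddAbove hE _) this
    rcases eq_or_lt_of_le (vprodF_nonneg (n+1) ζ) with hv0 | hvpos
    · calc cheb E ^ (n+1) * vprodF (n+1) ζ = 0 := by rw [← hv0]; ring
        _ ≤ vsup E (n+1) := vsup_nonneg hE _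
    have hsn : supNorm E q ≤ vsup E (n+1) / vprodF (n+1) ζ := by
      apply supNorm_le
      · exact div_nonneg (vsup_nonneg hE _) (le_of_lt hvpos)
      · intro z hz
        rw [le_div_iff₀ hvpos]
        exact hmem z hz
    calc cheb E ^ (n+1) * vprodF (n+1) ζ ≤ supNorm E q * vprodF (n+1) ζ :=
          mul_le_mul_of_nonneg_right hch (le_of_lt hvpos)
      _ ≤ (vsup E (n+1) / vprodF (n+1) ζ) * vprodF (n+1) ζ :=
          mul_le_mul_of_nonneg_right hsn (le_of_lt hvpos)
      _ = vsup E (n+1) := div_mul_cancel₀ _ (ne_of_gt hvpos)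
  -- conclude with sSup
  have hvne : (vset E n).Nonempty := ⟨_, fun _ => hne.some, fun _ => hne.some_mem, rfl⟩
  rw [show cheb E ^ (n+1) * vsup E n = vsup E n * cheb E ^ (n+1) by ring]
  rw [← le_div_iff₀ hpos]
  refine csSup_le hvne (fun x hx => ?_)
  rw [le_div_iff₀ hpos]
  calc x * cheb E ^ (n+1) = cheb E ^ (n+1) * x := by ring
    _ ≤ vsup E (n+1) := key x hx

lemma cheb_pow_le_vsup {E : Set ℂ} (hE : Bornology.IsBounded E) (hne : E.Nonempty) (n : ℕ) :
    cheb E ^ (n * (n + 1) / 2) ≤ vsup E n := by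
  induction n with
  | zero =>
      have : vsup E 0 = 1 := by
        have h1 : vset E 0 = {(1:ℝ)} := by
          ext x
          simp only [vset, Set.mem_setOf_eq, Set.mem_singleton_iff]
          constructor
          · rintro ⟨ζ, hζ, rfl⟩
            rw [vprodF]
            rw [Finset.prod_eq_one]
            rintro ⟨p1, p2⟩ hp
            simp only [Finset.mem_filter] at hp
            exact absurd hp.2 (by omega)
          · rintro rfl
            refine ⟨fun _ => hne.some, fun _ => hne.some_mem, ?_⟩
            rw [vprodF, Finset.prod_eq_one]
            rintro ⟨p1, p2⟩ hp
            simp only [Finset.mem_filter] at hp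
            exact absurd hp.2 (by omega)
        simp [vsup, h1]
      rw [this]
      norm_num
  | succ n ih =>
      have harith : (n+1) * (n+2) / 2 = n*(n+1)/2 + (n+1) := by
        have h1 : (n+1)*(n+2) = n*(n+1) + 2*(n+1) := by ring
        rcases Nat.even_mul_succ_self n with ⟨k, hk⟩
        omega
      calc cheb E ^ ((n+1)*(n+2)/2) = cheb E ^ (n+1) * cheb E ^ (n*(n+1)/2) := by
            rw [harith, pow_add]; ring
        _ ≤ cheb E ^ (n+1) * vsup E n :=
            mul_le_mul_of_nonneg_left ih (pow_nonneg (cheb_nonneg hE) _)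
        _ ≤ vsup E (n+1) := vsup_succ_ge hE hne n

lemma prod_pairs_eq {m : ℕ} (f : Fin m × Fin m → ℝ) :
    ∏ p ∈ Finset.univ.filter (fun p : Fin m × Fin m => p.1 < p.2), f p
      = ∏ i : Fin m, ∏ j ∈ Finset.Ioi i, f (i, j) := by
  rw [← Finset.univ_product_univ]
  rw [Finset.prod_filter]
  rw [Finset.prod_product]
  refine Finset.prod_congr rfl (fun i _ => ?_)
  rw [← Finset.prod_filter]
  refine Finset.prod_congr ?_ (fun _ _ => rfl)
  ext j
  simp [Finset.mem_Ioi]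

lemma vprodF_eq_abs_det {m : ℕ} (ζ : Fin m → ℂ) :
    vprodF m ζ = ‖Matrix.det (Matrix.vandermonde ζ)‖ := by
  rw [Matrix.det_vandermonde, vprodF, prod_pairs_eq, norm_prod]
  refine Finset.prod_congr rfl (fun i _ => ?_)
  rw [norm_prod]
  refine Finset.prod_congr rfl (fun j _ => ?_)
  exact (norm_sub_rev _ _).symm

/-- Key determinant bound: the Vandermonde value of points of `E` is bounded by
`m! * ∏ supNorm (p i)` for any monic family with `natDegree (p i) = i`. -/
lemma vprodF_le_factorial_prod {E : Set ℂ} (hE : Bornology.IsBounded E) {m : ℕ}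
    (p : Fin m → ℂ[X]) (hmon : ∀ i, (p i).Monic) (hdeg : ∀ i, (p i).natDegree = i)
    {ζ : Fin m → ℂ} (hζ : ∀ i, ζ i ∈ E) :
    vprodF m ζ ≤ (m.factorial : ℝ) * ∏ i : Fin m, supNorm E (p i) := by
  classical
  set L : Matrix (Fin m) (Fin m) ℂ := Matrix.of fun i k => (p i).coeff k with hL
  set A : Matrix (Fin m) (Fin m) ℂ := Matrix.of fun i j => (p i).eval (ζ j) with hA
  have hLV : L * (Matrix.vandermonde ζ)ᵀ = A := by
    ext i j
    simp only [hL, hA, Matrix.mul_apply, Matrix.of_apply, Matrix.transpose_apply,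
      Matrix.vandermonde_apply]
    rw [eval_eq_sum_range' (by rw [hdeg i]; exact i.isLt) (ζ j)]
    rw [← Fin.sum_univ_eq_sum_range]
  have hdetL : L.det = 1 := by
    have htri : L.BlockTriangular OrderDual.toDual := by
      intro i k hik
      simp only [OrderDual.toDual_lt_toDual] at hik
      simp only [hL, Matrix.of_apply]
      exact coeff_eq_zero_of_natDegree_lt (by rw [hdeg i]; exact hik)
    rw [Matrix.det_of_lowerTriangular L htri]
    refine Finset.prod_eq_one (fun i _ => ?_)
    simp only [hL, Matrix.of_apply]
    have := (hmon i).leadingCoeff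
    rwa [leadingCoeff, hdeg i] at this
  have hdetA : ‖A.det‖ = vprodF m ζ := by
    rw [← hLV, Matrix.det_mul, hdetL, one_mul, Matrix.det_transpose,
      vprodF_eq_abs_det]
  rw [← hdetA]
  rw [Matrix.det_apply]
  calc ‖∑ σ : Equiv.Perm (Fin m), Equiv.Perm.sign σ • ∏ i, A (σ i) i‖
      ≤ ∑ σ : Equiv.Perm (Fin m), ‖Equiv.Perm.sign σ • ∏ i, A (σ i) i‖ :=
        norm_sum_le _ _
    _ ≤ ∑ _σ : Equiv.Perm (Fin m), ∏ i : Fin m, supNorm E (p i) := by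
        refine Finset.sum_le_sum (fun σ _ => ?_)
        have h1 : ‖Equiv.Perm.sign σ • ∏ i, A (σ i) i‖
            = ‖∏ i, A (σ i) i‖ := by
          rcases Int.units_eq_one_or (Equiv.Perm.sign σ) with h | h <;>
            simp [h, Units.smul_def]
        rw [h1, norm_prod]
        have h2 : ∏ i : Fin m, ‖A (σ i) i‖
            ≤ ∏ i : Fin m, supNorm E (p (σ i)) := by
          refine Finset.prod_le_prod (fun i _ => norm_nonneg _) (fun i _ => ?_)
          exact abs_eval_le_supNorm hE _ (hζ i)
        refine le_trans h2 ?_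
        rw [Equiv.prod_comp σ (fun i => supNorm E (p i))]
    _ = (m.factorial : ℝ) * ∏ i : Fin m, supNorm E (p i) := by
        rw [Finset.sum_const, Finset.card_univ, Fintype.card_perm, Fintype.card_fin,
          nsmul_eq_mul]

lemma vsup_le_of_all {E : Set ℂ} {n : ℕ} {a : ℝ} (ha : 0 ≤ a)
    (h : ∀ ζ : Fin (n+1) → ℂ, (∀ i, ζ i ∈ E) → vprodF (n+1) ζ ≤ a) : vsup E n ≤ a :=
  Real.sSup_le (by rintro x ⟨ζ, hζ, rfl⟩; exact h ζ hζ) ha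

/-- The upper bound of (I): for any monic `p` of degree `k ≥ 1`,
`limsup dseq ≤ (supNorm E p)^(1/k)`. -/
lemma limsup_dseq_le {E : Set ℂ} (hE : Bornology.IsBounded E) {p : ℂ[X]} (hp : p.Monic)
    (hk : 1 ≤ p.natDegree) :
    Filter.limsup (dseq E) Filter.atTop ≤ supNorm E p ^ ((1:ℝ) / (p.natDegree : ℝ)) := by
  set k := p.natDegree with hkdef
  set s := supNorm E p with hsdef
  have hs0 : 0 ≤ s := supNorm_nonneg hE p
  have hk0 : (k:ℝ) ≠ 0 := Nat.cast_ne_zero.2 (by omega)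
  -- the auxiliary monic family
  set q : ∀ m : ℕ, Fin m → ℂ[X] := fun m i => X ^ ((i:ℕ) % k) * p ^ ((i:ℕ) / k) with hqdef
  have hqmon : ∀ m (i : Fin m), ((q m) i).Monic :=
    fun m i => (monic_X_pow _).mul (hp.pow _)
  have hqdeg : ∀ m (i : Fin m), ((q m) i).natDegree = i := by
    intro m i
    rw [(monic_X_pow _).natDegree_mul (hp.pow _), natDegree_X_pow, natDegree_pow, ← hkdef]
    rw [mul_comm ((i:ℕ)/k) k]
    exact Nat.mod_add_div _ _
  set RX := supNorm E X with hRX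
  have hRX0 : 0 ≤ RX := supNorm_nonneg hE X
  have hqbound : ∀ m (i : Fin m), supNorm E ((q m) i) ≤ RX ^ ((i:ℕ) % k) * s ^ ((i:ℕ) / k) := by
    intro m i
    calc supNorm E ((q m) i) ≤ supNorm E (X ^ ((i:ℕ) % k)) * supNorm E (p ^ ((i:ℕ)/k)) :=
          supNorm_mul_le hE _ _
      _ ≤ RX ^ ((i:ℕ) % k) * s ^ ((i:ℕ) / k) := by
          apply mul_le_mul (supNorm_pow_le hE _ _) (supNorm_pow_le hE _ _)
            (supNorm_nonneg hE _) (pow_nonneg hRX0 _)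
  rcases eq_or_lt_of_le hs0 with hs | hs
  · -- s = 0 : the sequence is eventually 0
    have hzero : ∀ n, k ≤ n → dseq E n = 0 := by
      intro n hn
      have hv : vsup E n ≤ 0 := by
        apply vsup_le_of_all le_rfl
        intro ζ hζ
        calc vprodF (n+1) ζ ≤ ((n+1).factorial : ℝ) * ∏ i : Fin (n+1), supNorm E ((q (n+1)) i) :=
              vprodF_le_factorial_prod hE _ (hqmon _) (hqdeg _) hζ
          _ = 0 := by
              rw [Finset.prod_eq_zero (Finset.mem_univ (⟨k, by omega⟩ : Fin (n+1)))]
              · ring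
              · have h1 := hqbound (n+1) ⟨k, by omega⟩
                have h2 := supNorm_nonneg hE ((q (n+1)) ⟨k, by omega⟩)
                simp only [Nat.mod_self, Nat.div_self (by omega : 0 < k), pow_zero, pow_one,
                  one_mul, ← hs] at h1
                linarith
      have hv' : vsup E n = 0 := le_antisymm hv (vsup_nonneg hE n)
      have hnpos : (0:ℝ) < ((n*(n+1):ℕ):ℝ) := by
        exact_mod_cast Nat.mul_pos (by omega : 0 < n) (by omega : 0 < n+1)
      rw [dseq, hv', Real.zero_rpow (by positivity)]
    have h1 : Filter.limsup (dseq E) Filter.atTop = 0 := by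
      have : dseq E =ᶠ[Filter.atTop] (fun _ => (0:ℝ)) :=
        Filter.eventually_atTop.2 ⟨k, hzero⟩
      rw [Filter.limsup_congr this, Filter.limsup_const]
    rw [h1, ← hs, Real.zero_rpow (by positivity)]
  -- now s > 0
  set K := max 1 (max RX 1 ^ k * max 1 s⁻¹) with hK
  have hK1 : (1:ℝ) ≤ K := le_max_left _ _
  have hsingle : ∀ m (i : Fin m), supNorm E ((q m) i) ≤ K * s ^ (((i:ℕ):ℝ) / k) := by
    intro m i
    have h1 := hqbound m i
    have h2 : RX ^ ((i:ℕ) % k) ≤ max RX 1 ^ k := by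
      calc RX ^ ((i:ℕ) % k) ≤ max RX 1 ^ ((i:ℕ) % k) :=
            pow_le_pow_left₀ hRX0 (le_max_left _ _) _
        _ ≤ max RX 1 ^ k := pow_le_pow_right₀ (le_max_right _ _)
            (le_of_lt (Nat.mod_lt _ (by omega)))
    have h3 : (s:ℝ) ^ ((i:ℕ) / k) ≤ max 1 s⁻¹ * s ^ (((i:ℕ):ℝ) / k) := by
      have hiq : (((i:ℕ):ℝ) / k) = ((i:ℕ)/k : ℕ) + (((i:ℕ) % k : ℕ):ℝ)/k := by
        rw [div_eq_iff hk0, add_mul, div_mul_cancel₀ _ hk0]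
        exact_mod_cast (by rw [mul_comm ((i:ℕ)/k) k]; exact (Nat.div_add_mod (i:ℕ) k).symm :
          ((i:ℕ) = (i:ℕ)/k * k + (i:ℕ)%k))
      rw [hiq, Real.rpow_add hs, Real.rpow_natCast]
      rw [show max 1 s⁻¹ * (s ^ ((i:ℕ)/k : ℕ) * s ^ ((((i:ℕ) % k : ℕ):ℝ)/k))
        = s ^ ((i:ℕ)/k : ℕ) * (max 1 s⁻¹ * s ^ ((((i:ℕ) % k : ℕ):ℝ)/k)) by ring]
      nth_rewrite 1 [← mul_one (s ^ ((i:ℕ)/k : ℕ))]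
      apply mul_le_mul_of_nonneg_left _ (pow_nonneg hs0 _)
      · rcases le_or_gt 1 s with hs1 | hs1
        · calc (1:ℝ) = 1 * 1 := by ring
            _ ≤ max 1 s⁻¹ * s ^ ((((i:ℕ) % k : ℕ):ℝ)/k) := by
                apply mul_le_mul (le_max_left _ _) _ zero_le_one
                  (le_trans zero_le_one (le_max_left _ _))
                exact Real.one_le_rpow hs1 (by positivity)
        · have hinv : s⁻¹ ≤ max 1 s⁻¹ := le_max_right _ _
          have hr1 : ((((i:ℕ) % k : ℕ):ℝ)/k) ≤ 1 := by
            rw [div_le_one (by positivity)]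
            exact_mod_cast le_of_lt (Nat.mod_lt _ (by omega : 0 < k))
          have : s ^ (-(1:ℝ)) ≥ s ^ (-((((i:ℕ) % k : ℕ):ℝ)/k)) := by
            apply Real.rpow_le_rpow_of_exponent_ge hs (le_of_lt hs1)
            linarith
          have h4 : s ^ (-((((i:ℕ) % k : ℕ):ℝ)/k)) ≤ max 1 s⁻¹ := by
            calc s ^ (-((((i:ℕ) % k : ℕ):ℝ)/k)) ≤ s ^ (-(1:ℝ)) := this
              _ = s⁻¹ := by rw [Real.rpow_neg_one]
              _ ≤ max 1 s⁻¹ := hinv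
          calc (1:ℝ) = s ^ (-((((i:ℕ) % k : ℕ):ℝ)/k)) * s ^ ((((i:ℕ) % k : ℕ):ℝ)/k) := by
                rw [← Real.rpow_add hs]; simp
            _ ≤ max 1 s⁻¹ * s ^ ((((i:ℕ) % k : ℕ):ℝ)/k) :=
                mul_le_mul_of_nonneg_right h4 (Real.rpow_nonneg hs0 _)
    calc supNorm E ((q m) i) ≤ RX ^ ((i:ℕ) % k) * s ^ ((i:ℕ) / k) := h1
      _ ≤ max RX 1 ^ k * (max 1 s⁻¹ * s ^ (((i:ℕ):ℝ) / k)) := by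
          apply mul_le_mul h2 h3 (pow_nonneg hs0 _) (by positivity)
      _ = (max RX 1 ^ k * max 1 s⁻¹) * s ^ (((i:ℕ):ℝ) / k) := by ring
      _ ≤ K * s ^ (((i:ℕ):ℝ) / k) := by
          apply mul_le_mul_of_nonneg_right (le_max_right _ _) (Real.rpow_nonneg hs0 _)
  have hK0 : (0:ℝ) < K := lt_of_lt_of_le one_pos hK1
  have hvsup : ∀ n : ℕ, vsup E n ≤
      (((n+1).factorial : ℝ) * K^(n+1)) * s ^ (((n:ℝ)*((n:ℝ)+1))/(2*k)) := by
    intro n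
    apply vsup_le_of_all (by positivity)
    intro ζ hζ
    calc vprodF (n+1) ζ
        ≤ (((n+1).factorial : ℝ)) * ∏ i : Fin (n+1), supNorm E ((q (n+1)) i) :=
          vprodF_le_factorial_prod hE _ (hqmon _) (hqdeg _) hζ
      _ ≤ (((n+1).factorial : ℝ)) * ∏ i : Fin (n+1), (K * s ^ (((i:ℕ):ℝ)/k)) := by
          apply mul_le_mul_of_nonneg_left
            (Finset.prod_le_prod (fun i _ => supNorm_nonneg hE _) (fun i _ => hsingle _ i))
            (by positivity)
      _ = (((n+1).factorial : ℝ) * K^(n+1)) * s ^ (((n:ℝ)*((n:ℝ)+1))/(2*k)) := by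
          rw [Finset.prod_mul_distrib, Finset.prod_const, Finset.card_univ, Fintype.card_fin,
            ← Real.rpow_sum_of_pos hs]
          have hsum : ∑ i : Fin (n+1), (((i:ℕ):ℝ)/k) = ((n:ℝ)*((n:ℝ)+1))/(2*k) := by
            rw [← Finset.sum_div]
            rw [Fin.sum_univ_eq_sum_range (fun j => ((j:ℕ):ℝ))]
            have hg : (∑ j ∈ Finset.range (n+1), (j:ℝ)) = ((n:ℝ)*((n:ℝ)+1))/2 := by
              have h2 := Finset.sum_range_id_mul_two (n+1)
              have h3 : ((∑ j ∈ Finset.range (n+1), j) * 2 : ℕ) = ((n+1) * n : ℕ) := by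
                rw [h2]; simp
              have h4 : ((∑ j ∈ Finset.range (n+1), j : ℕ) : ℝ) * 2 = ((n:ℝ)+1) * n := by
                exact_mod_cast congrArg (Nat.cast (R := ℝ)) h3
              push_cast at h4 ⊢
              linarith
            rw [hg]
            ring
          rw [hsum]
          ring
  -- dseq bound for n ≥ 1
  set t := s ^ ((1:ℝ)/(k:ℝ)) with ht
  have ht0 : 0 ≤ t := Real.rpow_nonneg hs0 _
  have hb : ∀ n : ℕ, 1 ≤ n → dseq E n ≤ (((n:ℝ)+1) * K) ^ ((2:ℝ)/n) * t := by
    intro n hn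
    have hn0 : (0:ℝ) < n := by exact_mod_cast hn
    have hnn1 : (0:ℝ) < ((n * (n+1) : ℕ):ℝ) := by
      exact_mod_cast Nat.mul_pos (by omega) (by omega)
    have hen : (0:ℝ) ≤ (2:ℝ)/((n * (n+1) : ℕ):ℝ) := by positivity
    have h1 : dseq E n ≤ ((((n+1).factorial : ℝ) * K^(n+1)) * s ^ (((n:ℝ)*((n:ℝ)+1))/(2*k)))
        ^ ((2:ℝ)/((n * (n+1) : ℕ):ℝ)) :=
      Real.rpow_le_rpow (vsup_nonneg hE n) (hvsup n) hen
    refine le_trans h1 ?_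
    rw [Real.mul_rpow (by positivity) (Real.rpow_nonneg hs0 _)]
    have h2 : (s ^ (((n:ℝ)*((n:ℝ)+1))/(2*k))) ^ ((2:ℝ)/((n * (n+1) : ℕ):ℝ)) = t := by
      rw [← Real.rpow_mul hs0, ht]
      congr 1
      have : ((n * (n+1) : ℕ):ℝ) = (n:ℝ)*((n:ℝ)+1) := by push_cast; ring
      rw [this]
      field_simp
    rw [h2]
    apply mul_le_mul_of_nonneg_right _ ht0
    have h3 : (((n+1).factorial : ℝ) * K^(n+1)) ≤ ((((n:ℝ)+1)) * K)^(n+1) := by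
      rw [mul_pow]
      apply mul_le_mul_of_nonneg_right _ (pow_nonneg (le_of_lt hK0) _)
      have := Nat.factorial_le_pow (n+1)
      calc ((n+1).factorial : ℝ) ≤ (((n+1)^(n+1) : ℕ) : ℝ) := by exact_mod_cast this
        _ = ((n:ℝ)+1)^(n+1) := by push_cast; ring
    calc (((n+1).factorial : ℝ) * K^(n+1)) ^ ((2:ℝ)/((n * (n+1) : ℕ):ℝ))
        ≤ (((((n:ℝ)+1)) * K)^(n+1)) ^ ((2:ℝ)/((n * (n+1) : ℕ):ℝ)) :=
          Real.rpow_le_rpow (by positivity) h3 hen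
      _ = (((n:ℝ)+1) * K) ^ ((2:ℝ)/(n:ℝ)) := by
          rw [← Real.rpow_natCast (((n:ℝ)+1) * K) (n+1), ← Real.rpow_mul (by positivity)]
          congr 1
          have : ((n * (n+1) : ℕ):ℝ) = (n:ℝ)*((n:ℝ)+1) := by push_cast; ring
          rw [this]
          push_cast
          field_simp
  -- the comparison sequence tends to t
  have htend : Filter.Tendsto (fun n : ℕ => (((n:ℝ)+1) * K) ^ ((2:ℝ)/n) * t)
      Filter.atTop (nhds t) := by
    have h1 : Filter.Tendsto (fun n : ℕ => (((n:ℝ)+1) * K) ^ ((2:ℝ)/n))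
        Filter.atTop (nhds 1) := by
      have hexp : ∀ n : ℕ, 1 ≤ n → (((n:ℝ)+1) * K) ^ ((2:ℝ)/n)
          = Real.exp (((2:ℝ)/n) * Real.log (((n:ℝ)+1) * K)) := by
        intro n hn
        rw [Real.rpow_def_of_pos (by positivity)]
        ring_nf
      have harg : Filter.Tendsto (fun n : ℕ => ((2:ℝ)/n) * Real.log (((n:ℝ)+1) * K))
          Filter.atTop (nhds 0) := by
        have hsplit : ∀ n : ℕ, 1 ≤ n → ((2:ℝ)/n) * Real.log (((n:ℝ)+1) * K)
            = 2 * ((Real.log ((n:ℝ)+1) / ((n:ℝ)+1)) * (((n:ℝ)+1)/n)) + 2 * (Real.log K / n) := by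
          intro n hn
          have hn0 : (n:ℝ) ≠ 0 := ne_of_gt (lt_of_lt_of_le one_pos (by exact_mod_cast hn))
          rw [Real.log_mul (by positivity) (ne_of_gt hK0)]
          field_simp
        have hA : Filter.Tendsto (fun n : ℕ => Real.log ((n:ℝ)+1) / ((n:ℝ)+1))
            Filter.atTop (nhds 0) := by
          have hdiv : Filter.Tendsto (fun x : ℝ => Real.log x / x) Filter.atTop (nhds 0) :=
            Real.isLittleO_log_id_atTop.tendsto_div_nhds_zero
          have hcomp : Filter.Tendsto (fun n : ℕ => (n:ℝ)+1) Filter.atTop Filter.atTop :=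
            Filter.tendsto_atTop_add_const_right _ 1 tendsto_natCast_atTop_atTop
          exact hdiv.comp hcomp
        have hB : Filter.Tendsto (fun n : ℕ => ((n:ℝ)+1)/(n:ℝ)) Filter.atTop (nhds 1) := by
          have h0 : Filter.Tendsto (fun n : ℕ => 1 + 1/(n:ℝ)) Filter.atTop (nhds (1+0)) :=
            tendsto_const_nhds.add tendsto_one_div_atTop_nhds_zero_nat
          rw [add_zero] at h0
          refine h0.congr' ?_
          filter_upwards [Filter.eventually_atTop.2 ⟨1, fun n hn => hn⟩] with n hn
          have hn0 : (n:ℝ) ≠ 0 := ne_of_gt (lt_of_lt_of_le one_pos (by exact_mod_cast hn))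
          field_simp
        have hC : Filter.Tendsto (fun n : ℕ => Real.log K / (n:ℝ)) Filter.atTop (nhds 0) :=
          tendsto_const_div_atTop_nhds_zero_nat _
        have hall : Filter.Tendsto
            (fun n : ℕ => 2 * ((Real.log ((n:ℝ)+1) / ((n:ℝ)+1)) * (((n:ℝ)+1)/(n:ℝ)))
              + 2 * (Real.log K / (n:ℝ))) Filter.atTop (nhds (2 * (0 * 1) + 2 * 0)) :=
          ((hA.mul hB).const_mul 2).add (hC.const_mul 2)
        norm_num at hall
        refine hall.congr' ?_
        filter_upwards [Filter.eventually_atTop.2 ⟨1, fun n hn => hn⟩] with n hn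
        exact (hsplit n hn).symm
      have hexp1 : Filter.Tendsto
          (fun n : ℕ => Real.exp (((2:ℝ)/n) * Real.log (((n:ℝ)+1) * K)))
          Filter.atTop (nhds 1) := by
        have := (Real.continuous_exp.tendsto 0).comp harg
        simpa [Function.comp_def] using this
      refine hexp1.congr' ?_
      filter_upwards [Filter.eventually_atTop.2 ⟨1, fun n hn => hn⟩] with n hn
      exact (hexp n hn).symm
    have := h1.mul_const t
    simpa using this
  -- conclude
  have hfle : dseq E ≤ᶠ[Filter.atTop] (fun n : ℕ => (((n:ℝ)+1) * K) ^ ((2:ℝ)/n) * t) :=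
    Filter.eventually_atTop.2 ⟨1, hb⟩
  have hge : Filter.IsBoundedUnder (· ≥ ·) Filter.atTop (dseq E) :=
    Filter.isBoundedUnder_of ⟨0, fun n => Real.rpow_nonneg (vsup_nonneg hE n) _⟩
  have hlim := Filter.limsup_le_limsup hfle hge.isCoboundedUnder_le htend.isBoundedUnder_le
  rwa [htend.limsup_eq] at hlim

lemma transfiniteDiameter1_eq_limsup_dseq (E : Set ℂ) :
    transfiniteDiameter1 E = Filter.limsup (dseq E) Filter.atTop := rfl

lemma dseq_bddAbove {E : Set ℂ} (hE : Bornology.IsBounded E) :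
    ∃ B : ℝ, ∀ n, dseq E n ≤ B := by
  obtain ⟨R, hR⟩ := hE.subset_closedBall 0
  set M := max 1 (2*R) with hM
  have hM1 : (1:ℝ) ≤ M := le_max_left _ _
  refine ⟨max 1 (M ^ (4:ℝ)), fun n => ?_⟩
  rcases Nat.eq_zero_or_pos n with rfl | hn
  · have : dseq E 0 = 1 := by
      rw [dseq]
      norm_num
    rw [this]; exact le_max_left _ _
  · have hv : vsup E n ≤ M ^ ((n+1) * (n+1)) :=
      vsup_le_of_all (by positivity) (fun ζ hζ => vprodF_le (fun i => hR (hζ i)))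
    have hnn : (0:ℝ) < ((n * (n+1) : ℕ):ℝ) := by
      exact_mod_cast Nat.mul_pos (by omega) (by omega)
    have h1 : dseq E n ≤ (M ^ ((n+1) * (n+1))) ^ ((2:ℝ)/((n * (n+1) : ℕ):ℝ)) :=
      Real.rpow_le_rpow (vsup_nonneg hE n) hv (by positivity)
    have h2 : (M ^ ((n+1) * (n+1))) ^ ((2:ℝ)/((n * (n+1) : ℕ):ℝ))
        = M ^ ((((n+1) * (n+1) : ℕ):ℝ) * ((2:ℝ)/((n * (n+1) : ℕ):ℝ))) := by
      rw [← Real.rpow_natCast M ((n+1)*(n+1)), ← Real.rpow_mul (by positivity)]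
    have h3 : (((n+1) * (n+1) : ℕ):ℝ) * ((2:ℝ)/((n * (n+1) : ℕ):ℝ)) ≤ 4 := by
      rw [mul_div_assoc', div_le_iff₀ hnn]
      have : ((n * (n+1) : ℕ):ℝ) = (n:ℝ) * ((n:ℝ)+1) := by push_cast; ring
      rw [this]
      have h4 : (((n+1) * (n+1) : ℕ):ℝ) = ((n:ℝ)+1) * ((n:ℝ)+1) := by push_cast; ring
      rw [h4]
      have hn1 : (1:ℝ) ≤ (n:ℝ) := by exact_mod_cast hn
      nlinarith
    calc dseq E n ≤ M ^ ((((n+1) * (n+1) : ℕ):ℝ) * ((2:ℝ)/((n * (n+1) : ℕ):ℝ))) := by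
          rw [← h2]; exact h1
      _ ≤ M ^ (4:ℝ) := Real.rpow_le_rpow_of_exponent_le hM1 h3
      _ ≤ max 1 (M ^ (4:ℝ)) := le_max_right _ _

lemma cheb_le_dseq {E : Set ℂ} (hE : Bornology.IsBounded E) (hne : E.Nonempty)
    {n : ℕ} (hn : 1 ≤ n) : cheb E ≤ dseq E n := by
  set c := cheb E with hc
  have hc0 : 0 ≤ c := cheb_nonneg hE
  have h1 : c ^ (n * (n+1) / 2) ≤ vsup E n := cheb_pow_le_vsup hE hne n
  have hnn : (0:ℝ) < ((n * (n+1) : ℕ):ℝ) := by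
    exact_mod_cast Nat.mul_pos (by omega) (by omega)
  have h2 : (c ^ (n * (n+1) / 2)) ^ ((2:ℝ)/((n * (n+1) : ℕ):ℝ)) ≤ dseq E n :=
    Real.rpow_le_rpow (pow_nonneg hc0 _) h1 (by positivity)
  have h3 : (c ^ (n * (n+1) / 2)) ^ ((2:ℝ)/((n * (n+1) : ℕ):ℝ)) = c := by
    rw [← Real.rpow_natCast c (n * (n+1)/2), ← Real.rpow_mul hc0]
    have h2m : 2 * (n * (n+1) / 2) = n * (n+1) := by
      rcases Nat.even_mul_succ_self n with ⟨k, hk⟩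
      omega
    have : ((n * (n+1) / 2 : ℕ):ℝ) * ((2:ℝ)/((n * (n+1) : ℕ):ℝ)) = 1 := by
      rw [mul_div_assoc', div_eq_one_iff_eq (ne_of_gt hnn)]
      rw [show ((n * (n+1) : ℕ):ℝ) = ((2 * (n * (n+1) / 2) : ℕ):ℝ) by rw [h2m]]
      push_cast
      ring
    rw [this, Real.rpow_one]
  rwa [h3] at h2

/-- Main lemma (Fekete–Szegő, limsup form). -/
lemma transfiniteDiameter1_eq_cheb {E : Set ℂ} (hE : Bornology.IsBounded E) :
    transfiniteDiameter1 E = cheb E := by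
  rw [transfiniteDiameter1_eq_limsup_dseq]
  rcases E.eq_empty_or_nonempty with rfl | hne
  · -- empty case
    have hvset : ∀ n, vset (∅ : Set ℂ) n = ∅ := by
      intro n
      ext x
      simp only [vset, Set.mem_setOf_eq, Set.mem_empty_iff_false, iff_false]
      rintro ⟨ζ, hζ, -⟩
      exact hζ 0
    have hdseq : ∀ n, 1 ≤ n → dseq (∅ : Set ℂ) n = 0 := by
      intro n hn
      have hnn : (0:ℝ) < ((n * (n+1) : ℕ):ℝ) := by
        exact_mod_cast Nat.mul_pos (by omega) (by omega)
      rw [dseq, vsup, hvset, Real.sSup_empty, Real.zero_rpow (by positivity)]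
    have hlim : Filter.limsup (dseq (∅ : Set ℂ)) Filter.atTop = 0 := by
      have : dseq (∅ : Set ℂ) =ᶠ[Filter.atTop] (fun _ => (0:ℝ)) :=
        Filter.eventually_atTop.2 ⟨1, hdseq⟩
      rw [Filter.limsup_congr this, Filter.limsup_const]
    rw [hlim]
    have hsup : ∀ p : ℂ[X], supNorm (∅ : Set ℂ) p = 0 := by
      intro p
      simp [_root_.supNorm, Real.sSup_empty]
    have hmem : (0:ℝ) ∈ chebSet (∅ : Set ℂ) := by
      refine ⟨X, monic_X, by simp, ?_⟩
      rw [hsup, Real.zero_rpow (by norm_num [natDegree_X])]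
    have hle : cheb (∅ : Set ℂ) ≤ 0 := csInf_le (chebSet_bddBelow hE) hmem
    have hge : 0 ≤ cheb (∅ : Set ℂ) := cheb_nonneg hE
    exact (le_antisymm hle hge).symm
  · apply le_antisymm
    · refine le_csInf (chebSet_nonempty E) ?_
      rintro x ⟨p, hm, hd, rfl⟩
      exact limsup_dseq_le hE hm hd
    · obtain ⟨B, hB⟩ := dseq_bddAbove hE
      refine Filter.le_limsup_of_frequently_le ?_ ⟨B, Filter.eventually_atTop.2 ⟨0, fun n _ => hB n⟩⟩
      refine Filter.Eventually.frequently ?_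
      exact Filter.eventually_atTop.2 ⟨1, fun n hn => cheb_le_dseq hE hne hn⟩

section Pfacts
variable {d : ℕ} {a : ℕ → ℂ}

noncomputable def Ppoly (d : ℕ) (a : ℕ → ℂ) : ℂ[X] :=
  ∑ k ∈ Finset.range (d + 1), C (a k) * X ^ k

lemma Ppoly_eval (d : ℕ) (a : ℕ → ℂ) (z : ℂ) :
    (Ppoly d a).eval z = ∑ k ∈ Finset.range (d + 1), a k * z ^ k := by
  simp [Ppoly, eval_finset_sum]

lemma Ppoly_coeff (d : ℕ) (a : ℕ → ℂ) (j : ℕ) :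
    (Ppoly d a).coeff j = if j ≤ d then a j else 0 := by
  rw [Ppoly, finset_sum_coeff]
  simp only [coeff_C_mul, coeff_X_pow, mul_ite, mul_one, mul_zero]
  rw [Finset.sum_ite_eq (Finset.range (d+1)) j a]
  simp [Nat.lt_succ_iff]

lemma Ppoly_natDegree_le (d : ℕ) (a : ℕ → ℂ) : (Ppoly d a).natDegree ≤ d := by
  apply natDegree_sum_le_of_forall_le
  intro k hk
  simp only [Finset.mem_range, Nat.lt_succ_iff] at hk
  exact le_trans (natDegree_C_mul_le _ _) (by simp [hk])

lemma Ppoly_sub_C_natDegree (hd : 1 ≤ d) (ha : a d ≠ 0) (w : ℂ) :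
    ((Ppoly d a) - C w).natDegree = d := by
  have hle : ((Ppoly d a) - C w).natDegree ≤ d :=
    le_trans (natDegree_sub_le _ _) (by simp [Ppoly_natDegree_le d a])
  have hco : ((Ppoly d a) - C w).coeff d = a d := by
    rw [coeff_sub, Ppoly_coeff, coeff_C, if_pos le_rfl, if_neg (by omega)]
    ring
  have hge : d ≤ ((Ppoly d a) - C w).natDegree :=
    le_natDegree_of_ne_zero (by rw [hco]; exact ha)
  omega

lemma Ppoly_sub_C_leadingCoeff (hd : 1 ≤ d) (ha : a d ≠ 0) (w : ℂ) :
    ((Ppoly d a) - C w).leadingCoeff = a d := by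
  rw [leadingCoeff, Ppoly_sub_C_natDegree hd ha, coeff_sub, Ppoly_coeff,
    if_pos le_rfl, coeff_C, if_neg (by omega)]
  ring

lemma Ppoly_natDegree (hd : 1 ≤ d) (ha : a d ≠ 0) : (Ppoly d a).natDegree = d := by
  have := Ppoly_sub_C_natDegree (a := a) hd ha 0
  simpa using this

lemma Ppoly_leadingCoeff (hd : 1 ≤ d) (ha : a d ≠ 0) : (Ppoly d a).leadingCoeff = a d := by
  have := Ppoly_sub_C_leadingCoeff (a := a) hd ha 0
  simpa using this

lemma preimage_bounded (hd : 1 ≤ d) (ha : a d ≠ 0) {E : Set ℂ}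
    (hE : Bornology.IsBounded E) :
    Bornology.IsBounded ((fun z : ℂ => ∑ k ∈ Finset.range (d + 1), a k * z ^ k) ⁻¹' E) := by
  obtain ⟨R, hR⟩ := hE.subset_closedBall 0
  have hdeg : 0 < (Ppoly d a).degree := by
    rw [degree_eq_natDegree (fun h => by simp [h] at ha; exact ha (by
      have := Ppoly_leadingCoeff (a := a) hd ha; simp [h] at this; exact this.symm))]
    exact_mod_cast lt_of_lt_of_le hd (le_of_eq (Ppoly_natDegree hd ha).symm)
  have htend : Filter.Tendsto (fun z : ℂ => ‖(Ppoly d a).eval z‖)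
      (Bornology.cobounded ℂ) Filter.atTop :=
    (Ppoly d a).tendsto_norm_atTop hdeg tendsto_norm_cobounded_atTop
  have hev : ∀ᶠ z in Bornology.cobounded ℂ, R < ‖(Ppoly d a).eval z‖ :=
    htend.eventually_gt_atTop R
  have hbdd : Bornology.IsBounded ({z : ℂ | R < ‖(Ppoly d a).eval z‖}ᶜ) := by
    rw [Bornology.isBounded_def, compl_compl]
    exact Filter.eventually_iff.1 hev
  apply hbdd.subset
  intro z hz
  simp only [Set.mem_preimage] at hz
  have hz' := hR hz
  simp only [Metric.mem_closedBall, Complex.dist_eq, sub_zero] at hz'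
  simp only [Set.mem_compl_iff, Set.mem_setOf_eq, not_lt]
  rw [show ((Ppoly d a).eval z) = ∑ k ∈ Finset.range (d + 1), a k * z ^ k from Ppoly_eval d a z]
  exact hz'
end Pfacts

lemma multiset_prod_swap {α β : Type*} (s : Multiset α) (t : Multiset β) (g : α → β → ℝ) :
    (s.map fun b => (t.map fun a => g b a).prod).prod
      = (t.map fun a => (s.map fun b => g b a).prod).prod := by
  induction s using Multiset.induction_on with
  | empty => simp
  | cons b s ih =>
      simp only [Multiset.map_cons, Multiset.prod_cons, ih, ← Multiset.prod_map_mul]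

lemma multiset_prod_le_pow_card {s : Multiset ℝ} {S : ℝ} (hS0 : 0 ≤ S)
    (h : ∀ x ∈ s, 0 ≤ x ∧ x ≤ S) : s.prod ≤ S ^ (Multiset.card s) := by
  induction s using Multiset.induction_on with
  | empty => simp
  | cons b s ih =>
      simp only [Multiset.prod_cons, Multiset.card_cons, pow_succ]
      have hb := h b (Multiset.mem_cons_self _ _)
      have hs : ∀ x ∈ s, 0 ≤ x ∧ x ≤ S := fun x hx => h x (Multiset.mem_cons_of_mem hx)
      have hprod0 : 0 ≤ s.prod := Multiset.prod_nonneg (fun x hx => (hs x hx).1)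
      calc b * s.prod ≤ S * s.prod := mul_le_mul_of_nonneg_right hb.2 hprod0
        _ ≤ S * S ^ (Multiset.card s) := mul_le_mul_of_nonneg_left (ih hs) hS0
        _ = S ^ (Multiset.card s) * S := by ring

lemma norm_multiset_prod' (m : Multiset ℂ) : ‖m.prod‖ = (m.map fun x => ‖x‖).prod :=
  Multiset.induction_on m (by simp) (fun a s ih => by simp [ih])

section Pullback
variable {d : ℕ} {a : ℕ → ℂ} {E : Set ℂ}

lemma cheb_preimage_le (hd : 1 ≤ d) (ha : a d ≠ 0) (hE : Bornology.IsBounded E)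
    (hS : Bornology.IsBounded ((fun z : ℂ => ∑ k ∈ Finset.range (d + 1), a k * z ^ k) ⁻¹' E))
    {x : ℝ} (hx : x ∈ chebSet E) :
    cheb ((fun z : ℂ => ∑ k ∈ Finset.range (d + 1), a k * z ^ k) ⁻¹' E)
      ≤ (x / ‖a d‖) ^ ((1:ℝ)/(d:ℝ)) := by
  set S := (fun z : ℂ => ∑ k ∈ Finset.range (d + 1), a k * z ^ k) ⁻¹' E with hSdef
  obtain ⟨p, hpm, hpd, rfl⟩ := hx
  set m := p.natDegree with hm
  set A := ‖a d‖ with hA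
  have hA0 : 0 < A := by simpa [hA] using norm_pos_iff.mpr ha
  have hd0 : (d:ℝ) ≠ 0 := Nat.cast_ne_zero.2 (by omega)
  have hm0 : (m:ℝ) ≠ 0 := Nat.cast_ne_zero.2 (by omega)
  have hsp0 : 0 ≤ supNorm E p := supNorm_nonneg hE p
  set r : ℂ[X] := C (((a d) ^ m)⁻¹) * (p.comp (Ppoly d a)) with hr
  have hPd : (Ppoly d a).natDegree = d := Ppoly_natDegree hd ha
  have hrm : r.Monic := by
    rw [Monic, hr, leadingCoeff_mul, leadingCoeff_C, leadingCoeff_comp (by rw [hPd]; omega),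
      Ppoly_leadingCoeff hd ha, hpm.leadingCoeff, one_mul, ← hm]
    field_simp
  have hrdeg : r.natDegree = m * d := by
    rw [hr, natDegree_C_mul (by simp [pow_ne_zero, ha]), natDegree_comp, hPd]
  have hrsup : supNorm S r ≤ supNorm E p / A ^ m := by
    apply supNorm_le (div_nonneg hsp0 (by positivity))
    intro z hz
    have hz' : (Ppoly d a).eval z ∈ E := by rw [Ppoly_eval]; exact hz
    rw [hr, eval_mul, eval_C, norm_mul, eval_comp, norm_inv, norm_pow]
    rw [div_eq_inv_mul, ← hA]
    exact mul_le_mul_of_nonneg_left (abs_eval_le_supNorm hE p hz') (by positivity)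
  have hrdeg1 : 1 ≤ r.natDegree := by
    rw [hrdeg]
    have hm1 : 1 ≤ m := hpd
    exact Nat.one_le_iff_ne_zero.2 (Nat.mul_ne_zero (by omega) (by omega))
  have h1 : cheb S ≤ (supNorm E p / A ^ m) ^ ((1:ℝ)/((m * d : ℕ):ℝ)) := by
    calc cheb S ≤ supNorm S r ^ ((1:ℝ)/(r.natDegree : ℝ)) := cheb_le hS hrm hrdeg1
      _ ≤ (supNorm E p / A ^ m) ^ ((1:ℝ)/((m * d : ℕ):ℝ)) := by
          rw [hrdeg]
          exact Real.rpow_le_rpow (supNorm_nonneg hS r) hrsup (by positivity)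
  refine le_trans h1 (le_of_eq ?_)
  have hsp' : (0:ℝ) ≤ supNorm E p / A ^ m := div_nonneg hsp0 (by positivity)
  have hmd : (1:ℝ)/((m * d : ℕ):ℝ) = (1/(m:ℝ)) * (1/(d:ℝ)) := by
    push_cast
    field_simp
  rw [hmd, Real.rpow_mul hsp']
  congr 1
  rw [Real.div_rpow hsp0 (by positivity)]
  congr 1
  rw [← Real.rpow_natCast A m, ← Real.rpow_mul (le_of_lt hA0), mul_one_div_cancel hm0,
    Real.rpow_one]

lemma chebE_le (hd : 1 ≤ d) (ha : a d ≠ 0) (hE : Bornology.IsBounded E)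
    (hS : Bornology.IsBounded ((fun z : ℂ => ∑ k ∈ Finset.range (d + 1), a k * z ^ k) ⁻¹' E))
    {x : ℝ} (hx : x ∈ chebSet ((fun z : ℂ => ∑ k ∈ Finset.range (d + 1), a k * z ^ k) ⁻¹' E)) :
    cheb E ≤ ‖a d‖ * x ^ (d:ℝ) := by
  set S := (fun z : ℂ => ∑ k ∈ Finset.range (d + 1), a k * z ^ k) ⁻¹' E with hSdef
  obtain ⟨q, hqm, hqd, rfl⟩ := hx
  set m := q.natDegree with hm
  set A := ‖a d‖ with hA
  have hA0 : 0 < A := by simpa [hA] using norm_pos_iff.mpr ha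
  have hd0 : (d:ℝ) ≠ 0 := Nat.cast_ne_zero.2 (by omega)
  have hm0 : (m:ℝ) ≠ 0 := Nat.cast_ne_zero.2 (by omega)
  set sq := supNorm S q with hsq
  have hsq0 : 0 ≤ sq := supNorm_nonneg hS q
  have hcard : Multiset.card q.roots = m :=
    splits_iff_card_roots.mp (IsAlgClosed.splits q)
  have hqfact : q = (q.roots.map fun α => X - C α).prod :=
    ((IsAlgClosed.splits q).eq_prod_roots_of_monic hqm)
  set p' : ℂ[X] := (q.roots.map fun β => X - C ((Ppoly d a).eval β)).prod with hp'
  have hp'm : p'.Monic :=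
    monic_multiset_prod_of_monic _ _ (fun i _ => monic_X_sub_C _)
  have hp'deg : p'.natDegree = m := by
    rw [hp', natDegree_multiset_prod_of_monic _ (by
      intro f hf
      obtain ⟨β, _, rfl⟩ := Multiset.mem_map.mp hf
      exact monic_X_sub_C _)]
    rw [Multiset.map_map]
    simp [natDegree_X_sub_C, hcard]
  -- key pointwise bound on E
  have hkey : ∀ w ∈ E, ‖p'.eval w‖ ≤ A ^ m * sq ^ d := by
    intro w hw
    set Rw := ((Ppoly d a) - C w).roots with hRw
    have hRwcard : Multiset.card Rw = d := by
      have h := splits_iff_card_roots.mp (IsAlgClosed.splits ((Ppoly d a) - C w))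
      rw [Ppoly_sub_C_natDegree hd ha w] at h
      exact h
    have hfact : (Ppoly d a) - C w = C (a d) * (Rw.map fun α => X - C α).prod := by
      have h := (IsAlgClosed.splits ((Ppoly d a) - C w)).eq_prod_roots
      rwa [Ppoly_sub_C_leadingCoeff hd ha w] at h
    have hfib : ∀ β : ℂ, (Ppoly d a).eval β - w = a d * (Rw.map fun α => β - α).prod := by
      intro β
      have h := congrArg (eval β) hfact
      simpa [eval_multiset_prod, Multiset.map_map] using h
    have hmemS : ∀ α ∈ Rw, α ∈ S := by
      intro α hα
      have h0 := (mem_roots'.mp hα).2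
      rw [IsRoot, eval_sub, eval_C, sub_eq_zero] at h0
      have : (Ppoly d a).eval α ∈ E := by rw [h0]; exact hw
      rw [Ppoly_eval] at this
      exact this
    -- chain of equalities
    have e1 : ‖p'.eval w‖
        = (q.roots.map fun β => ‖w - (Ppoly d a).eval β‖).prod := by
      rw [hp', eval_multiset_prod, Multiset.map_map, norm_multiset_prod', Multiset.map_map]
      congr 1
      apply Multiset.map_congr rfl
      intro β _
      simp
    have e2 : ∀ β : ℂ, ‖w - (Ppoly d a).eval β‖
        = A * (Rw.map fun α => ‖β - α‖).prod := by
      intro β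
      rw [← norm_sub_rev, hfib β, norm_mul, norm_multiset_prod', Multiset.map_map, hA]
      rfl
    have e3 : ‖p'.eval w‖
        = A ^ m * (q.roots.map fun β => (Rw.map fun α => ‖β - α‖).prod).prod := by
      rw [e1]
      rw [Multiset.map_congr rfl (fun β _ => e2 β)]
      rw [show (fun β => A * (Rw.map fun α => ‖β - α‖).prod)
        = (fun β => (fun _ => A) β * (fun β => (Rw.map fun α => ‖β - α‖).prod) β)
        from rfl]
      rw [Multiset.prod_map_mul]
      congr 1
      rw [Multiset.map_const', Multiset.prod_replicate, hcard]
    have e4 : (q.roots.map fun β => (Rw.map fun α => ‖β - α‖).prod).prod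
        = (Rw.map fun α => (q.roots.map fun β => ‖β - α‖).prod).prod :=
      multiset_prod_swap _ _ _
    have e5 : ∀ α : ℂ, (q.roots.map fun β => ‖β - α‖).prod
        = ‖q.eval α‖ := by
      intro α
      conv_rhs => rw [hqfact]
      rw [eval_multiset_prod, Multiset.map_map, norm_multiset_prod', Multiset.map_map]
      congr 1
      apply Multiset.map_congr rfl
      intro β _
      simp [norm_sub_rev]
    rw [e3, e4, Multiset.map_congr rfl (fun α _ => e5 α)]
    apply mul_le_mul_of_nonneg_left _ (by positivity)
    have := multiset_prod_le_pow_card (s := Rw.map fun α => ‖q.eval α‖) hsq0 ?_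
    · rwa [Multiset.card_map, hRwcard] at this
    · intro x hx
      obtain ⟨α, hα, rfl⟩ := Multiset.mem_map.mp hx
      exact ⟨norm_nonneg _, abs_eval_le_supNorm hS q (hmemS α hα)⟩
  have hsup' : supNorm E p' ≤ A ^ m * sq ^ d :=
    supNorm_le (by positivity) hkey
  have h1 : cheb E ≤ (A ^ m * sq ^ d) ^ ((1:ℝ)/(m:ℝ)) := by
    calc cheb E ≤ supNorm E p' ^ ((1:ℝ)/(p'.natDegree : ℝ)) :=
          cheb_le hE hp'm (by omega)
      _ ≤ (A ^ m * sq ^ d) ^ ((1:ℝ)/(m:ℝ)) := by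
          rw [hp'deg]
          exact Real.rpow_le_rpow (supNorm_nonneg hE p') hsup' (by positivity)
  refine le_trans h1 (le_of_eq ?_)
  rw [Real.mul_rpow (by positivity) (by positivity)]
  congr 1
  · rw [← Real.rpow_natCast A m, ← Real.rpow_mul (le_of_lt hA0), mul_one_div_cancel hm0,
      Real.rpow_one]
  · rw [← Real.rpow_natCast sq d, ← Real.rpow_mul hsq0, ← Real.rpow_mul hsq0]
    ring_nf
end Pullback


/-- Transfinite diameter of the pullback of a bounded set `E ⊆ ℂ` by a polynomial
`F(z) = a_d z^d + ⋯ + a_0` of degree `d ≥ 1`: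
`d_∞(F⁻¹E) = |a_d|^{-1/d} · d_∞(E)^{1/d}`. -/
theorem transfiniteDiameter_polynomial_preimage
    (d : ℕ) (hd : 1 ≤ d) (a : ℕ → ℂ) (ha : a d ≠ 0)
    (E : Set ℂ) (hE : Bornology.IsBounded E) :
    transfiniteDiameter1 ((fun z : ℂ => ∑ k ∈ Finset.range (d + 1), a k * z ^ k) ⁻¹' E)
      = ‖a d‖ ^ (-(1 : ℝ) / (d : ℝ))
        * transfiniteDiameter1 E ^ ((1 : ℝ) / (d : ℝ)) := by
  have hS : Bornology.IsBounded
      ((fun z : ℂ => ∑ k ∈ Finset.range (d + 1), a k * z ^ k) ⁻¹' E) :=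
    preimage_bounded hd ha hE
  set S := (fun z : ℂ => ∑ k ∈ Finset.range (d + 1), a k * z ^ k) ⁻¹' E with hSdef
  rw [transfiniteDiameter1_eq_cheb hS, transfiniteDiameter1_eq_cheb hE]
  set A := ‖a d‖ with hA
  have hA0 : (0:ℝ) < A := by simpa [hA] using norm_pos_iff.mpr ha
  set c := cheb E with hc
  set c1 := cheb S with hc1
  have hc0 : 0 ≤ c := cheb_nonneg hE
  have hc10 : 0 ≤ c1 := cheb_nonneg hS
  have hd0 : (d:ℝ) ≠ 0 := Nat.cast_ne_zero.2 (by omega)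
  have hdlec : A * c1 ^ (d:ℝ) ≤ c := by
    refine le_csInf (chebSet_nonempty E) ?_
    intro x hx
    have hx0 : 0 ≤ x := chebSet_nonneg hE hx
    have h1 : c1 ≤ (x / A) ^ ((1:ℝ)/(d:ℝ)) := cheb_preimage_le hd ha hE hS hx
    have h2 : c1 ^ (d:ℝ) ≤ ((x / A) ^ ((1:ℝ)/(d:ℝ))) ^ (d:ℝ) :=
      Real.rpow_le_rpow hc10 h1 (by positivity)
    have h3 : ((x / A) ^ ((1:ℝ)/(d:ℝ))) ^ (d:ℝ) = x / A := by
      rw [← Real.rpow_mul (by positivity), one_div_mul_cancel hd0, Real.rpow_one]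
    rw [h3] at h2
    calc A * c1 ^ (d:ℝ) ≤ A * (x / A) := mul_le_mul_of_nonneg_left h2 (le_of_lt hA0)
      _ = x := by field_simp
  have hcled : c ≤ A * c1 ^ (d:ℝ) := by
    have hT : (c / A) ^ ((1:ℝ)/(d:ℝ)) ≤ c1 := by
      refine le_csInf (chebSet_nonempty S) ?_
      intro x hx
      have hx0 : 0 ≤ x := chebSet_nonneg hS hx
      have h1 : c ≤ A * x ^ (d:ℝ) := chebE_le hd ha hE hS hx
      have h2 : c / A ≤ x ^ (d:ℝ) := by
        rw [div_le_iff₀ hA0, mul_comm]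
        exact h1
      have h3 : (c / A) ^ ((1:ℝ)/(d:ℝ)) ≤ (x ^ (d:ℝ)) ^ ((1:ℝ)/(d:ℝ)) :=
        Real.rpow_le_rpow (by positivity) h2 (by positivity)
      rwa [← Real.rpow_mul hx0, mul_one_div_cancel hd0, Real.rpow_one] at h3
    have h4 : ((c / A) ^ ((1:ℝ)/(d:ℝ))) ^ (d:ℝ) ≤ c1 ^ (d:ℝ) :=
      Real.rpow_le_rpow (by positivity) hT (by positivity)
    rw [← Real.rpow_mul (by positivity), one_div_mul_cancel hd0, Real.rpow_one] at h4
    calc c = A * (c / A) := by field_simp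
      _ ≤ A * c1 ^ (d:ℝ) := mul_le_mul_of_nonneg_left h4 (le_of_lt hA0)
  have hceq : c = A * c1 ^ (d:ℝ) := le_antisymm hcled hdlec
  rw [hceq]
  rw [Real.mul_rpow (le_of_lt hA0) (Real.rpow_nonneg hc10 _)]
  rw [← Real.rpow_mul hc10, mul_one_div_cancel hd0, Real.rpow_one]
  rw [← mul_assoc, ← Real.rpow_add hA0]
  rw [show (-(1:ℝ)/(d:ℝ) + (1:ℝ)/(d:ℝ)) = 0 by ring, Real.rpow_zero, one_mul]
end

section
/- Let A be an invertible N×N complex matrix, b ∈ ℂ^N, and let F : ℂ^N → ℂ^N be the affine map F(z) = Az + b. Then for every bounded set E ⊆ ℂ^N, d_∞(F⁻¹(E)) = |det A|^{-1/N} · d_∞(E). -/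
/-- The Fekete–Leja transfinite diameter of a set `E ⊆ ℂ^N`:
`d_∞(E) = limsup_n d_n(E)`, where `d_n(E)` is the supremum, over tuples of points of `E`
indexed by the monomials of degree `≤ n` in `N` variables, of the absolute value of the
Vandermonde-type determinant `det (e_i(ζ_j))`, raised to the power `1 / D(n)` with
`D(n) = N * binom(N+n, N+1)`. -/
noncomputable def transfiniteDiameter (N : ℕ) (E : Set (Fin N → ℂ)) : ℝ :=
  Filter.limsup (fun n : ℕ =>
    (sSup {x : ℝ |
        ∃ ζ : {α : Fin N → Fin (n + 1) // (∑ k, (α k : ℕ)) ≤ n} → (Fin N → ℂ),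
          (∀ j, ζ j ∈ E) ∧
          x = norm
              (Matrix.det (Matrix.of
                (fun (i j : {α : Fin N → Fin (n + 1) // (∑ k, (α k : ℕ)) ≤ n}) =>
                  ∏ k, (ζ j k) ^ (i.1 k : ℕ))))})
      ^ ((1 : ℝ) / ((N * Nat.choose (N + n) (N + 1) : ℕ) : ℝ)))
    Filter.atTop


open Finset

abbrev Idx (N n : ℕ) := {α : Fin N → Fin (n + 1) // (∑ k, (α k : ℕ)) ≤ n}

section count
variable (N n : ℕ)

lemma Idx.sum_split (α : Idx (N+1) n) :
    (α.1 0 : ℕ) + (∑ k : Fin N, (α.1 k.succ : ℕ)) ≤ n := by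
  have := α.2
  rwa [Fin.sum_univ_succ] at this

lemma Idx.entry_le (α : Idx (N+1) n) (k : Fin N) :
    (α.1 k.succ : ℕ) ≤ n - (α.1 0 : ℕ) := by
  have h := Idx.sum_split N n α
  have h2 : (α.1 k.succ : ℕ) ≤ ∑ k : Fin N, (α.1 k.succ : ℕ) :=
    Finset.single_le_sum (f := fun k : Fin N => (α.1 k.succ : ℕ))
      (fun _ _ => Nat.zero_le _) (Finset.mem_univ k)
  omega

def idxEquiv : Idx (N+1) n ≃ (a : Fin (n+1)) × Idx N (n - a) where
  toFun α := ⟨α.1 0,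
    ⟨fun k => ⟨(α.1 k.succ : ℕ), Nat.lt_succ_of_le (Idx.entry_le N n α k)⟩, by
      show (∑ k : Fin N, (α.1 k.succ : ℕ)) ≤ n - (α.1 0 : ℕ)
      have h := Idx.sum_split N n α
      omega⟩⟩
  invFun p := ⟨Fin.cons p.1 (fun k =>
      ⟨(p.2.1 k : ℕ), by
        have h1 : (p.2.1 k : ℕ) < n - (p.1 : ℕ) + 1 := (p.2.1 k).isLt
        have h2 : (p.1 : ℕ) < n + 1 := p.1.isLt
        omega⟩), by
    rw [Fin.sum_univ_succ]
    simp only [Fin.cons_zero, Fin.cons_succ]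
    have h1 : (∑ k : Fin N, (p.2.1 k : ℕ)) ≤ n - (p.1 : ℕ) := p.2.2
    have h2 : (p.1 : ℕ) < n + 1 := p.1.isLt
    omega⟩
  left_inv α := by
    apply Subtype.ext
    funext k
    induction k using Fin.cases with
    | zero => simp
    | succ k => simp
  right_inv p := by
    refine Sigma.ext (by simp) ?_
    apply heq_of_eq
    apply Subtype.ext
    funext k
    apply Fin.ext
    simp

lemma card_Idx : ∀ N n : ℕ, Fintype.card (Idx N n) = (N + n).choose N := by
  intro N
  induction N with
  | zero =>
    intro n
    rw [Nat.choose_zero_right]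
    rw [Fintype.card_eq_one_iff]
    refine ⟨⟨fun k => k.elim0, by simp⟩, ?_⟩
    intro β
    apply Subtype.ext
    funext k
    exact k.elim0
  | succ N ih =>
    intro n
    rw [Fintype.card_congr (idxEquiv N n), Fintype.card_sigma]
    rw [Fin.sum_univ_eq_sum_range (fun a => Fintype.card (Idx N (n - a)))]
    have : ∀ a ∈ Finset.range (n+1), Fintype.card (Idx N (n - a)) = (N + (n - a)).choose N :=
      fun a _ => ih (n - a)
    rw [Finset.sum_congr rfl this]
    have hrefl : ∑ a ∈ Finset.range (n+1), (N + (n - a)).choose N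
        = ∑ j ∈ Finset.range (n+1), (N + j).choose N := by
      rw [← Finset.sum_range_reflect (fun j => (N + j).choose N) (n+1)]
      exact Finset.sum_congr rfl fun a ha => by
        congr 1
    rw [hrefl]
    have : ∑ j ∈ Finset.range (n+1), (N + j).choose N
        = ∑ m ∈ Finset.Icc N (N + n), m.choose N := by
      rw [← Finset.Ico_add_one_right_eq_Icc, Finset.sum_Ico_eq_sum_range]
      apply Finset.sum_congr (by congr 1; omega)
      intro j _
      rfl
    rw [this, Nat.sum_Icc_choose]
    congr 1
    omega
end count

section sums
variable (N n : ℕ)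

def permIdxEquiv (σ : Equiv.Perm (Fin N)) : Idx N n ≃ Idx N n where
  toFun α := ⟨α.1 ∘ σ, by
    have : (∑ k, ((α.1 ∘ σ) k : ℕ)) = ∑ k, (α.1 k : ℕ) :=
      Equiv.sum_comp σ (fun k => (α.1 k : ℕ))
    rw [this]; exact α.2⟩
  invFun α := ⟨α.1 ∘ σ.symm, by
    have : (∑ k, ((α.1 ∘ σ.symm) k : ℕ)) = ∑ k, (α.1 k : ℕ) :=
      Equiv.sum_comp σ.symm (fun k => (α.1 k : ℕ))
    rw [this]; exact α.2⟩
  left_inv α := by apply Subtype.ext; funext k; simp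
  right_inv α := by apply Subtype.ext; funext k; simp

lemma sum_Idx_symm (k k' : Fin N) :
    ∑ α : Idx N n, (α.1 k : ℕ) = ∑ α : Idx N n, (α.1 k' : ℕ) := by
  have := Equiv.sum_comp (permIdxEquiv N n (Equiv.swap k k'))
    (fun α : Idx N n => (α.1 k' : ℕ))
  rw [← this]
  apply Fintype.sum_congr
  intro α
  show (α.1 k : ℕ) = (α.1 (Equiv.swap k k' k') : ℕ)
  rw [Equiv.swap_apply_right]

lemma sum_choose_aux : ∑ a ∈ Finset.range (n+1), (N + (n - a)).choose N
    = (N + 1 + n).choose (N + 1) := by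
  have hrefl : ∑ a ∈ Finset.range (n+1), (N + (n - a)).choose N
      = ∑ j ∈ Finset.range (n+1), (N + j).choose N := by
    rw [← Finset.sum_range_reflect (fun j => (N + j).choose N) (n+1)]
    exact Finset.sum_congr rfl fun a ha => by congr 1
  rw [hrefl]
  have : ∑ j ∈ Finset.range (n+1), (N + j).choose N
      = ∑ m ∈ Finset.Icc N (N + n), m.choose N := by
    rw [← Finset.Ico_add_one_right_eq_Icc, Finset.sum_Ico_eq_sum_range]
    apply Finset.sum_congr (by congr 1; omega)
    intro j _
    rfl
  rw [this, Nat.sum_Icc_choose]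
  congr 1
  omega

lemma sum_mul_card : ∑ a ∈ Finset.range (n+1), a * (N + (n - a)).choose N
    = (N + 1 + n).choose (N + 2) := by
  induction n with
  | zero =>
    simp [Nat.choose_eq_zero_of_lt (by omega : N + 1 < N + 2)]
  | succ n ih =>
    rw [Finset.sum_range_succ' (fun a => a * (N + (n + 1 - a)).choose N) (n+1)]
    have e1 : ∀ i, (i + 1) * (N + (n + 1 - (i+1))).choose N
        = i * (N + (n - i)).choose N + (N + (n - i)).choose N := by
      intro i
      have : n + 1 - (i+1) = n - i := by omega
      rw [this]; ring
    rw [Finset.sum_congr rfl fun i _ => e1 i, Finset.sum_add_distrib, ih, sum_choose_aux]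
    have : (N + 1 + (n + 1)).choose (N + 2) = (N + 1 + n).choose (N + 1) + (N + 1 + n).choose (N + 2) := by
      have h := Nat.choose_succ_succ (N + 1 + n) (N + 1)
      have e : N + 1 + (n+1) = (N + 1 + n) + 1 := by omega
      rw [e, h]
    rw [this]
    ring

lemma sum_Idx (k : Fin N) :
    ∑ α : Idx N n, (α.1 k : ℕ) = (N + n).choose (N + 1) := by
  cases N with
  | zero => exact k.elim0
  | succ N =>
    rw [sum_Idx_symm (N+1) n k 0]
    have h := Equiv.sum_comp (idxEquiv N n).symm (fun α : Idx (N+1) n => (α.1 0 : ℕ))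
    rw [← h]
    have : ∀ p : (a : Fin (n+1)) × Idx N (n - a),
        (((idxEquiv N n).symm p).1 0 : ℕ) = (p.1 : ℕ) := fun p => rfl
    rw [Fintype.sum_congr _ _ this]
    rw [← Finset.univ_sigma_univ, Finset.sum_sigma]
    have : ∀ a : Fin (n+1), (∑ _β : Idx N (n - a), (a : ℕ))
        = (a : ℕ) * (N + (n - (a:ℕ))).choose N := by
      intro a
      rw [Finset.sum_const, ← Fintype.card, card_Idx N (n - a), smul_eq_mul, mul_comm]
    rw [Fintype.sum_congr _ _ this]
    rw [Fin.sum_univ_eq_sum_range (fun a => a * (N + (n - a)).choose N)]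
    rw [sum_mul_card]
end sums

/-- If `M i j = 0` unless `i = j` or `w i < w j`, then `det M` is the product of diagonal. -/
lemma det_of_weight {ι : Type*} [Fintype ι] [DecidableEq ι] (M : Matrix ι ι ℂ) (w : ι → ℕ)
    (h : ∀ i j, M i j ≠ 0 → i = j ∨ w i < w j) : M.det = ∏ i, M i i := by
  rw [Matrix.det_apply]
  rw [Finset.sum_eq_single (1 : Equiv.Perm ι)]
  · simp
  · intro σ _ hσ
    have : ∃ i, M (σ i) i = 0 := by
      by_contra hc
      push_neg at hc
      have hle : ∀ i, w (σ i) ≤ w i := by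
        intro i
        rcases h _ _ (hc i) with h1 | h2
        · rw [h1]
        · exact h2.le
      have hlt : ∃ i, w (σ i) < w i := by
        obtain ⟨i, hi⟩ : ∃ i, σ i ≠ i := by
          by_contra hc2; push_neg at hc2; exact hσ (Equiv.ext hc2)
        exact ⟨i, (h _ _ (hc i)).resolve_left hi⟩
      obtain ⟨i0, hi0⟩ := hlt
      have : ∑ i, w (σ i) < ∑ i, w i :=
        Finset.sum_lt_sum (fun i _ => hle i) ⟨i0, Finset.mem_univ i0, hi0⟩
      rw [Equiv.sum_comp σ w] at this
      exact lt_irrefl _ this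
    obtain ⟨i, hi⟩ := this
    rw [Finset.prod_eq_zero (Finset.mem_univ i) (by exact hi), smul_zero]
  · simp


open MvPolynomial

namespace TD
variable {N n : ℕ}

/-- The finsupp associated to an index. -/
noncomputable def toF (α : Idx N n) : Fin N →₀ ℕ :=
  Finsupp.equivFunOnFinite.symm (fun k => (α.1 k : ℕ))

@[simp] lemma toF_apply (α : Idx N n) (k : Fin N) : toF α k = (α.1 k : ℕ) := rfl

lemma toF_injective : Function.Injective (toF (N := N) (n := n)) := by
  intro α β h
  apply Subtype.ext
  funext k
  have := congrArg (fun d => d k) h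
  simpa [toF, Fin.ext_iff] using this

lemma toF_sum (α : Idx N n) : (toF α).sum (fun _ e => e) = ∑ k, (α.1 k : ℕ) := by
  rw [Finsupp.sum_fintype]
  · rfl
  · intro; rfl

lemma toF_surj_on (d : Fin N →₀ ℕ) (hd : (d.sum fun _ e => e) ≤ n) :
    ∃ α : Idx N n, toF α = d := by
  have hk : ∀ k, d k ≤ n := by
    intro k
    refine le_trans ?_ hd
    rw [Finsupp.sum_fintype _ _ (fun _ => rfl)]
    exact Finset.single_le_sum (f := fun k => d k) (fun _ _ => Nat.zero_le _) (Finset.mem_univ k)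
  refine ⟨⟨fun k => ⟨d k, Nat.lt_succ_of_le (hk k)⟩, ?_⟩, ?_⟩
  · show (∑ k, d k) ≤ n
    rw [Finsupp.sum_fintype _ _ (fun _ => rfl)] at hd
    exact hd
  · apply Finsupp.ext; intro k; rfl

/-- The monomial `z^α`. -/
noncomputable def mon (α : Idx N n) : MvPolynomial (Fin N) ℂ := monomial (toF α) 1

lemma eval_mon (z : Fin N → ℂ) (α : Idx N n) :
    eval z (mon α) = ∏ k, z k ^ (α.1 k : ℕ) := by
  rw [mon, eval_monomial, one_mul, Finsupp.prod_pow]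
  rfl

lemma totalDegree_mon (α : Idx N n) : (mon (n := n) α).totalDegree ≤ n := by
  refine le_trans (totalDegree_monomial_le _ _) ?_
  show ((toF α).sum fun _ e => e) ≤ n
  rw [toF_sum]
  exact α.2

/-- Expansion of a polynomial of total degree ≤ n in monomials. -/
lemma expand (p : MvPolynomial (Fin N) ℂ) (hp : p.totalDegree ≤ n) :
    p = ∑ β : Idx N n, coeff (toF β) p • mon β := by
  have hmon : ∀ β : Idx N n, coeff (toF β) p • mon β = monomial (toF β) (coeff (toF β) p) := by
    intro β
    rw [mon, smul_monomial, smul_eq_mul, mul_one]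
  rw [Fintype.sum_congr _ _ hmon]
  set T : Finset (Fin N →₀ ℕ) := Finset.univ.image (toF (N := N) (n := n)) with hT
  have h1 : ∑ β : Idx N n, monomial (toF β) (coeff (toF β) p)
      = ∑ d ∈ T, monomial d (coeff d p) := by
    rw [hT, Finset.sum_image (fun a _ b _ h => toF_injective h)]
  rw [h1]
  have hsub : p.support ⊆ T := by
    intro d hd
    have hds : (d.sum fun _ e => e) ≤ n := by
      refine le_trans ?_ hp
      exact MvPolynomial.le_totalDegree hd
    obtain ⟨α, hα⟩ := toF_surj_on d hds
    rw [hT]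
    exact Finset.mem_image.mpr ⟨α, Finset.mem_univ α, hα⟩
  rw [← Finset.sum_subset hsub ?_]
  · exact as_sum p
  · intro d _ hd
    rw [MvPolynomial.notMem_support_iff.mp hd, monomial_zero]

end TD


namespace TD
variable {N n : ℕ}

lemma totalDegree_aeval_mon (f : Fin N → MvPolynomial (Fin N) ℂ)
    (hf : ∀ i, (f i).totalDegree ≤ 1) (α : Idx N n) :
    (aeval f (mon α)).totalDegree ≤ n := by
  rw [mon, aeval_monomial]
  refine le_trans (totalDegree_mul _ _) ?_
  have h1 : ((algebraMap ℂ (MvPolynomial (Fin N) ℂ)) 1).totalDegree = 0 := by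
    simp
  rw [h1, zero_add]
  refine le_trans (totalDegree_finset_prod _ _) ?_
  have h2 : ∀ i ∈ (toF α).support, (f i ^ toF α i).totalDegree ≤ toF α i := by
    intro i _
    refine le_trans (totalDegree_pow _ _) ?_
    calc toF α i * (f i).totalDegree ≤ toF α i * 1 :=
          Nat.mul_le_mul_left _ (hf i)
      _ = toF α i := Nat.mul_one _
  refine le_trans (Finset.sum_le_sum h2) ?_
  have : (∑ i ∈ (toF α).support, toF α i) = (toF α).sum fun _ e => e := rfl
  rw [this, toF_sum]
  exact α.2

/-- The substitution matrix on monomials of degree ≤ n. -/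
noncomputable def MatS (n : ℕ) (f : Fin N → MvPolynomial (Fin N) ℂ) :
    Matrix (Idx N n) (Idx N n) ℂ :=
  Matrix.of fun α β => coeff (toF β) (aeval f (mon α))

lemma MatS_apply (f : Fin N → MvPolynomial (Fin N) ℂ) (α β : Idx N n) :
    MatS n f α β = coeff (toF β) (aeval f (mon α)) := rfl

lemma aeval_mon_expand (f : Fin N → MvPolynomial (Fin N) ℂ)
    (hf : ∀ i, (f i).totalDegree ≤ 1) (α : Idx N n) :
    aeval f (mon α) = ∑ β : Idx N n, MatS n f α β • mon β :=
  expand _ (totalDegree_aeval_mon f hf α)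

lemma coeff_mon (β γ : Idx N n) : coeff (toF γ) (mon β) = if β = γ then 1 else 0 := by
  rw [mon, coeff_monomial]
  by_cases h : β = γ
  · rw [if_pos h, if_pos (by rw [h])]
  · rw [if_neg h, if_neg (fun hh => h (toF_injective hh))]

lemma MatS_comp (g f : Fin N → MvPolynomial (Fin N) ℂ)
    (hg : ∀ i, (g i).totalDegree ≤ 1) (hf : ∀ i, (f i).totalDegree ≤ 1) :
    MatS (N := N) n (fun i => aeval f (g i)) = MatS n g * MatS n f := by
  ext α γ
  have h0 : aeval (fun i => aeval f (g i)) (mon (n := n) α) = aeval f (aeval g (mon α)) := by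
    rw [← comp_aeval]
    rfl
  rw [Matrix.mul_apply, MatS_apply, h0, aeval_mon_expand g hg α, map_sum]
  simp_rw [map_smul]
  rw [coeff_sum]
  simp_rw [coeff_smul]
  rfl

lemma eval_aeval (z : Fin N → ℂ) (f : Fin N → MvPolynomial (Fin N) ℂ)
    (p : MvPolynomial (Fin N) ℂ) :
    eval z (aeval f p) = eval (fun i => eval z (f i)) p := by
  have h1 : ∀ (w : Fin N → ℂ) (q : MvPolynomial (Fin N) ℂ), aeval (R := ℂ) w q = eval w q :=
    fun w q => RingHom.congr_fun (coe_aeval_eq_eval (f := w)) q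
  calc eval z (aeval f p) = aeval (R := ℂ) z (aeval f p) := (h1 z _).symm
    _ = aeval (fun i => aeval (R := ℂ) z (f i)) p := comp_aeval_apply (f := f) (aeval (R := ℂ) z) p
    _ = eval (fun i => eval z (f i)) p := by
        rw [show (fun i => aeval (R := ℂ) z (f i)) = fun i => eval z (f i) from
          funext fun i => h1 z (f i)]
        exact h1 _ _

end TD


namespace TD
variable {N n : ℕ}

noncomputable def linP (A : Matrix (Fin N) (Fin N) ℂ) : Fin N → MvPolynomial (Fin N) ℂ :=
  fun i => ∑ j, C (A i j) * X j

noncomputable def trP (b : Fin N → ℂ) : Fin N → MvPolynomial (Fin N) ℂ :=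
  fun i => X i + C (b i)

noncomputable def affP (A : Matrix (Fin N) (Fin N) ℂ) (b : Fin N → ℂ) :
    Fin N → MvPolynomial (Fin N) ℂ :=
  fun i => (∑ j, C (A i j) * X j) + C (b i)

lemma linP_deg (A : Matrix (Fin N) (Fin N) ℂ) : ∀ i, (linP A i).totalDegree ≤ 1 := by
  intro i
  refine le_trans (totalDegree_finset_sum _ _) ?_
  refine Finset.sup_le fun j _ => ?_
  refine le_trans (totalDegree_mul _ _) ?_
  simp [totalDegree_C, totalDegree_X]

lemma trP_deg (b : Fin N → ℂ) : ∀ i, (trP b i).totalDegree ≤ 1 := by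
  intro i
  refine le_trans (totalDegree_add _ _) (max_le ?_ ?_) <;>
    simp [totalDegree_C, totalDegree_X]

lemma affP_deg (A : Matrix (Fin N) (Fin N) ℂ) (b : Fin N → ℂ) :
    ∀ i, (affP A b i).totalDegree ≤ 1 := by
  intro i
  refine le_trans (totalDegree_add _ _) (max_le ?_ ?_)
  · exact linP_deg A i
  · simp [totalDegree_C]

lemma aeval_mon_prod (f : Fin N → MvPolynomial (Fin N) ℂ) (α : Idx N n) :
    aeval f (mon α) = ∏ k, (f k) ^ (α.1 k : ℕ) := by
  rw [mon, aeval_monomial, map_one, one_mul]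
  rw [Finsupp.prod_pow]
  rfl

lemma prod_X_pow (s : Finset (Fin N)) (m : Fin N → ℕ) :
    (∏ k ∈ s, (X k : MvPolynomial (Fin N) ℂ) ^ m k)
      = monomial (∑ k ∈ s, Finsupp.single k (m k)) 1 := by
  induction s using Finset.cons_induction with
  | empty => simp
  | cons a s ha ih =>
    rw [Finset.prod_cons, Finset.sum_cons, ih, X_pow_eq_monomial, monomial_mul, one_mul]

lemma aeval_linP_linP (A B : Matrix (Fin N) (Fin N) ℂ) (i : Fin N) :
    aeval (linP B) (linP A i) = linP (A * B) i := by
  simp only [linP, map_sum, map_mul, aeval_C, aeval_X, algebraMap_eq,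
    Finset.mul_sum, Matrix.mul_apply, map_sum, Finset.sum_mul, mul_assoc, C_mul]
  exact Finset.sum_comm

lemma MatS_linP_mul (A B : Matrix (Fin N) (Fin N) ℂ) :
    MatS (N := N) n (linP (A * B)) = MatS n (linP A) * MatS n (linP B) := by
  have h : linP (A * B) = fun i => aeval (linP B) (linP A i) :=
    funext fun i => (aeval_linP_linP A B i).symm
  rw [h, MatS_comp (linP A) (linP B) (linP_deg A) (linP_deg B)]

end TD


namespace TD
variable {N n : ℕ}

lemma linP_diagonal (d : Fin N → ℂ) (i : Fin N) :
    linP (Matrix.diagonal d) i = C (d i) * X i := by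
  show (∑ j, C (Matrix.diagonal d i j) * X j) = C (d i) * X i
  rw [Finset.sum_eq_single_of_mem i (Finset.mem_univ i)]
  · rw [Matrix.diagonal_apply_eq]
  · intro j _ hj
    rw [Matrix.diagonal_apply_ne' d hj, map_zero, zero_mul]

lemma sum_single_eq_toF (α : Idx N n) :
    (∑ k : Fin N, Finsupp.single k ((α.1 k : ℕ))) = toF α := by
  apply Finsupp.ext
  intro m
  rw [Finset.sum_apply']
  simp [Finsupp.single_apply]

lemma MatS_diagonal (d : Fin N → ℂ) :
    MatS (N := N) n (linP (Matrix.diagonal d))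
      = Matrix.diagonal (fun α : Idx N n => ∏ k, d k ^ (α.1 k : ℕ)) := by
  ext α β
  rw [MatS_apply, aeval_mon_prod]
  have h1 : ∀ k : Fin N, (linP (Matrix.diagonal d) k) ^ (α.1 k : ℕ)
      = C (d k ^ (α.1 k : ℕ)) * X k ^ (α.1 k : ℕ) := fun k => by
    rw [linP_diagonal, mul_pow, ← C_pow]
  rw [Fintype.prod_congr _ _ h1, Finset.prod_mul_distrib, ← map_prod, prod_X_pow,
    sum_single_eq_toF, coeff_C_mul, coeff_monomial]
  by_cases h : α = β
  · subst h
    rw [if_pos rfl, Matrix.diagonal_apply_eq, mul_one]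
  · rw [if_neg (fun hh => h (toF_injective hh)), Matrix.diagonal_apply_ne _ h, mul_zero]

lemma det_MatS_diagonal (d : Fin N → ℂ) :
    (MatS (N := N) n (linP (Matrix.diagonal d))).det
      = (∏ k, d k) ^ ((N + n).choose (N + 1)) := by
  rw [MatS_diagonal, Matrix.det_diagonal, Finset.prod_comm]
  have h1 : ∀ k : Fin N, (∏ α : Idx N n, d k ^ (α.1 k : ℕ))
      = d k ^ ((N + n).choose (N + 1)) := by
    intro k
    rw [Finset.prod_pow_eq_pow_sum, sum_Idx]
  rw [Fintype.prod_congr _ _ h1, Finset.prod_pow]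

end TD


namespace TD
variable {N n : ℕ}

lemma linP_transvection (t : Matrix.TransvectionStruct (Fin N) ℂ) (k : Fin N) :
    linP t.toMatrix k = X k + (if k = t.i then C t.c * X t.j else 0) := by
  obtain ⟨i, j, hij, c⟩ := t
  show (∑ s, C ((Matrix.transvection i j c) k s) * X s) = _
  have hE : ∀ s : Fin N, (Matrix.transvection i j c) k s
      = (if k = s then (1 : ℂ) else 0) + (if i = k ∧ j = s then c else 0) := by
    intro s
    simp [Matrix.transvection, Matrix.one_apply, Matrix.single, Matrix.add_apply]
  simp_rw [hE, map_add, add_mul, Finset.sum_add_distrib]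
  congr 1
  · simp_rw [apply_ite C, map_one, map_zero, ite_mul, one_mul, zero_mul]
    rw [Finset.sum_ite_eq, if_pos (Finset.mem_univ k)]
  · by_cases hk : k = i
    · rw [if_pos hk]
      rw [Finset.sum_congr rfl (fun s _ =>
        show C (if i = k ∧ j = s then c else 0) * X s = if j = s then C c * X s else 0 from by
          by_cases hs : j = s <;> simp [hs, hk])]
      rw [Finset.sum_ite_eq, if_pos (Finset.mem_univ j)]
    · rw [if_neg hk]
      refine Finset.sum_eq_zero fun s _ => ?_
      rw [if_neg (fun h => hk h.1.symm), map_zero, zero_mul]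

section transvection
variable (t : Matrix.TransvectionStruct (Fin N) ℂ)

noncomputable def tD (α : Idx N n) : Fin N →₀ ℕ :=
  ∑ k ∈ Finset.univ.erase t.i, Finsupp.single k (α.1 k : ℕ)

noncomputable def μ (α : Idx N n) (s : ℕ) : Fin N →₀ ℕ :=
  Finsupp.single t.i s + Finsupp.single t.j ((α.1 t.i : ℕ) - s) + tD t α

lemma tD_apply (α : Idx N n) (m' : Fin N) :
    tD t α m' = if m' = t.i then 0 else (α.1 m' : ℕ) := by
  rw [tD, Finset.sum_apply']
  rw [Finset.sum_congr rfl (fun k _ => Finsupp.single_apply)]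
  rw [Finset.sum_ite_eq' (Finset.univ.erase t.i) m' (fun k => (α.1 k : ℕ))]
  by_cases h : m' = t.i
  · rw [if_neg (by simp [h]), if_pos h]
  · rw [if_pos (by simp [h]), if_neg h]

lemma μ_apply_i (α : Idx N n) (s : ℕ) : μ t α s t.i = s := by
  rw [μ, Finsupp.add_apply, Finsupp.add_apply, tD_apply, Finsupp.single_apply,
    Finsupp.single_apply, if_pos rfl, if_neg t.hij.symm, if_pos rfl]
  omega

lemma μ_apply_j (α : Idx N n) (s : ℕ) :
    μ t α s t.j = ((α.1 t.i : ℕ) - s) + (α.1 t.j : ℕ) := by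
  rw [μ, Finsupp.add_apply, Finsupp.add_apply, tD_apply, Finsupp.single_apply,
    Finsupp.single_apply, if_neg t.hij, if_pos rfl, if_neg (fun h => t.hij h.symm)]
  omega

lemma μ_apply_other (α : Idx N n) (s : ℕ) (m' : Fin N) (h1 : m' ≠ t.i) (h2 : m' ≠ t.j) :
    μ t α s m' = (α.1 m' : ℕ) := by
  rw [μ, Finsupp.add_apply, Finsupp.add_apply, tD_apply, Finsupp.single_apply,
    Finsupp.single_apply, if_neg (fun h => h1 h.symm), if_neg (fun h => h2 h.symm),
    if_neg h1]
  omega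

lemma μ_top (α : Idx N n) : μ t α (α.1 t.i : ℕ) = toF α := by
  apply Finsupp.ext
  intro m'
  by_cases h1 : m' = t.i
  · subst h1; rw [μ_apply_i, toF_apply]
  · by_cases h2 : m' = t.j
    · subst h2; rw [μ_apply_j, toF_apply]; omega
    · rw [μ_apply_other t α _ m' h1 h2, toF_apply]

lemma aeval_transvection_mon (α : Idx N n) :
    aeval (linP t.toMatrix) (mon α) = ∑ s ∈ Finset.range ((α.1 t.i : ℕ) + 1),
      C (t.c ^ ((α.1 t.i : ℕ) - s) * (((α.1 t.i : ℕ).choose s : ℕ) : ℂ)) *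
        monomial (μ t α s) 1 := by
  rw [aeval_mon_prod]
  rw [← Finset.mul_prod_erase Finset.univ _ (Finset.mem_univ t.i)]
  have h1 : ∀ k ∈ Finset.univ.erase t.i,
      (linP t.toMatrix k) ^ (α.1 k : ℕ) = X k ^ (α.1 k : ℕ) := by
    intro k hk
    rw [linP_transvection, if_neg (Finset.mem_erase.mp hk).1, add_zero]
  rw [Finset.prod_congr rfl h1, prod_X_pow, linP_transvection, if_pos rfl, add_pow,
    Finset.sum_mul]
  refine Finset.sum_congr rfl fun s hs => ?_
  rw [mul_pow, ← C_pow, X_pow_eq_monomial, X_pow_eq_monomial,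
    ← map_natCast (C : ℂ →+* MvPolynomial (Fin N) ℂ) (((α.1 t.i : ℕ)).choose s),
    C_mul_monomial, monomial_mul, mul_comm _ (C ((((α.1 t.i : ℕ)).choose s : ℕ) : ℂ)),
    C_mul_monomial, monomial_mul, C_mul_monomial]
  show monomial _ _ = monomial _ _
  rw [μ]
  congr 1
  ring

lemma MatS_transvection_ne (α β : Idx N n) (h : MatS n (linP t.toMatrix) α β ≠ 0) :
    α = β ∨ (α.1 t.j : ℕ) < (β.1 t.j : ℕ) := by
  rw [MatS_apply, aeval_transvection_mon, coeff_sum] at h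
  simp_rw [coeff_C_mul, coeff_monomial] at h
  obtain ⟨s, hs, hne⟩ := Finset.exists_ne_zero_of_sum_ne_zero h
  have hμ : μ t α s = toF β := by
    by_contra hc
    rw [if_neg hc, mul_zero] at hne
    exact hne rfl
  rw [Finset.mem_range] at hs
  by_cases hstop : s = (α.1 t.i : ℕ)
  · left
    subst hstop
    exact (toF_injective ((μ_top t α).symm.trans hμ)).symm ▸ rfl
  · right
    have hj := congrArg (fun d => d t.j) hμ
    simp only [toF_apply] at hj
    rw [μ_apply_j] at hj
    omega

lemma MatS_transvection_diag (α : Idx N n) : MatS n (linP t.toMatrix) α α = 1 := by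
  rw [MatS_apply, aeval_transvection_mon, coeff_sum]
  simp_rw [coeff_C_mul, coeff_monomial]
  rw [Finset.sum_eq_single (α.1 t.i : ℕ)]
  · rw [if_pos (μ_top t α), Nat.sub_self, pow_zero, Nat.choose_self, Nat.cast_one,
      one_mul, mul_one]
  · intro s hs hne
    rw [Finset.mem_range] at hs
    have : μ t α s ≠ toF α := by
      intro hc
      have hj := congrArg (fun d => d t.j) hc
      simp only [toF_apply] at hj
      rw [μ_apply_j] at hj
      omega
    rw [if_neg this, mul_zero]
  · intro hmem
    exact absurd (Finset.mem_range.mpr (by omega)) hmem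

lemma det_MatS_transvection : (MatS (N := N) n (linP t.toMatrix)).det = 1 := by
  rw [det_of_weight _ (fun α : Idx N n => (α.1 t.j : ℕ))
    (fun α β h => MatS_transvection_ne t α β h)]
  rw [Fintype.prod_congr _ _ (MatS_transvection_diag t)]
  exact Finset.prod_const_one

end transvection
end TD


namespace TD
variable {N n : ℕ}

noncomputable def ν (σ : Fin N → ℕ) : Fin N →₀ ℕ := ∑ k : Fin N, Finsupp.single k (σ k)

lemma ν_apply (σ : Fin N → ℕ) (m' : Fin N) : ν σ m' = σ m' := by
  rw [ν, Finset.sum_apply']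
  rw [Finset.sum_congr rfl (fun k _ => Finsupp.single_apply)]
  rw [Finset.sum_ite_eq' Finset.univ m' σ, if_pos (Finset.mem_univ m')]

lemma ν_eq_toF (α : Idx N n) : ν (fun k => (α.1 k : ℕ)) = toF α := by
  apply Finsupp.ext; intro m'; rw [ν_apply, toF_apply]

lemma aeval_trP_mon (b : Fin N → ℂ) (α : Idx N n) :
    aeval (trP b) (mon α) = ∑ σ ∈ Fintype.piFinset (fun k => Finset.range ((α.1 k : ℕ) + 1)),
      C (∏ k, b k ^ ((α.1 k : ℕ) - σ k) * (((α.1 k : ℕ).choose (σ k) : ℕ) : ℂ)) *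
        monomial (ν σ) 1 := by
  rw [aeval_mon_prod]
  have h1 : ∀ k : Fin N, (trP b k) ^ (α.1 k : ℕ)
      = ∑ s ∈ Finset.range ((α.1 k : ℕ) + 1),
          C (b k ^ ((α.1 k : ℕ) - s) * (((α.1 k : ℕ).choose s : ℕ) : ℂ)) *
            monomial (Finsupp.single k s) 1 := by
    intro k
    rw [trP, add_pow]
    refine Finset.sum_congr rfl fun s hs => ?_
    rw [← C_pow, X_pow_eq_monomial,
      ← map_natCast (C : ℂ →+* MvPolynomial (Fin N) ℂ) ((α.1 k : ℕ).choose s),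
      mul_comm (monomial (Finsupp.single k s) 1) (C (b k ^ ((α.1 k : ℕ) - s))),
      C_mul_monomial, mul_comm _ (C (((α.1 k : ℕ).choose s : ℕ) : ℂ)), C_mul_monomial,
      C_mul_monomial]
    congr 1
    ring
  rw [Fintype.prod_congr _ _ h1, Finset.prod_univ_sum]
  refine Finset.sum_congr rfl fun σ hσ => ?_
  rw [Finset.prod_mul_distrib, ← map_prod]
  congr 1
  calc (∏ k : Fin N, (monomial (Finsupp.single k (σ k)) 1 : MvPolynomial (Fin N) ℂ))
      = ∏ k : Fin N, (X k : MvPolynomial (Fin N) ℂ) ^ σ k :=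
        Finset.prod_congr rfl fun k _ => (X_pow_eq_monomial).symm
    _ = monomial (ν σ) 1 := by rw [prod_X_pow, ν]

lemma MatS_trP_ne (b : Fin N → ℂ) (α β : Idx N n) (h : MatS n (trP b) α β ≠ 0) :
    α = β ∨ (n - ∑ k, (α.1 k : ℕ)) < (n - ∑ k, (β.1 k : ℕ)) := by
  rw [MatS_apply, aeval_trP_mon, coeff_sum] at h
  simp_rw [coeff_C_mul, coeff_monomial] at h
  obtain ⟨σ, hσ, hne⟩ := Finset.exists_ne_zero_of_sum_ne_zero h
  have hν : ν σ = toF β := by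
    by_contra hc
    rw [if_neg hc, mul_zero] at hne
    exact hne rfl
  have hβσ : ∀ k, (β.1 k : ℕ) = σ k := by
    intro k
    have := congrArg (fun d => d k) hν
    simp only [ν_apply, toF_apply] at this
    omega
  rw [Fintype.mem_piFinset] at hσ
  have hle : ∀ k, σ k ≤ (α.1 k : ℕ) := by
    intro k
    have := hσ k
    rw [Finset.mem_range] at this
    omega
  by_cases hall : ∀ k, σ k = (α.1 k : ℕ)
  · left
    apply Subtype.ext
    funext k
    apply Fin.ext
    rw [hβσ k, hall k]
  · right
    push_neg at hall
    obtain ⟨k0, hk0⟩ := hall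
    have hlt : (∑ k, (β.1 k : ℕ)) < ∑ k, (α.1 k : ℕ) := by
      rw [Finset.sum_congr rfl (fun k _ => hβσ k)]
      exact Finset.sum_lt_sum (fun k _ => hle k)
        ⟨k0, Finset.mem_univ k0, lt_of_le_of_ne (hle k0) hk0⟩
    have := α.2
    omega

lemma MatS_trP_diag (b : Fin N → ℂ) (α : Idx N n) : MatS n (trP b) α α = 1 := by
  rw [MatS_apply, aeval_trP_mon, coeff_sum]
  simp_rw [coeff_C_mul, coeff_monomial]
  rw [Finset.sum_eq_single (fun k => (α.1 k : ℕ))]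
  · rw [if_pos (ν_eq_toF α)]
    rw [Finset.prod_congr rfl (fun k _ => by
      rw [Nat.sub_self, pow_zero, Nat.choose_self, Nat.cast_one, one_mul] :
        ∀ k ∈ Finset.univ, b k ^ ((α.1 k : ℕ) - (α.1 k : ℕ))
          * (((α.1 k : ℕ).choose ((α.1 k : ℕ)) : ℕ) : ℂ) = 1)]
    rw [Finset.prod_const_one, mul_one]
  · intro σ hσ hne
    have : ν σ ≠ toF α := by
      intro hc
      apply hne
      funext k
      have := congrArg (fun d => d k) hc
      simp only [ν_apply, toF_apply] at this
      exact this
    rw [if_neg this, mul_zero]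
  · intro hmem
    exact absurd (Fintype.mem_piFinset.mpr fun k => Finset.mem_range.mpr (by omega)) hmem

lemma det_MatS_trP (b : Fin N → ℂ) : (MatS (N := N) n (trP b)).det = 1 := by
  rw [det_of_weight _ (fun α : Idx N n => n - ∑ k, (α.1 k : ℕ))
    (fun α β h => MatS_trP_ne b α β h)]
  rw [Fintype.prod_congr _ _ (MatS_trP_diag b)]
  exact Finset.prod_const_one

end TD


namespace TD
variable {N n : ℕ}

lemma det_MatS_linP (A : Matrix (Fin N) (Fin N) ℂ) :
    (MatS (N := N) n (linP A)).det = A.det ^ ((N + n).choose (N + 1)) := by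
  refine Matrix.diagonal_transvection_induction
    (fun M => (MatS n (linP M)).det = M.det ^ ((N + n).choose (N + 1))) A ?_ ?_ ?_
  · intro D _
    rw [det_MatS_diagonal, Matrix.det_diagonal]
  · intro t
    rw [det_MatS_transvection, Matrix.TransvectionStruct.det, one_pow]
  · intro M1 M2 h1 h2
    rw [MatS_linP_mul, Matrix.det_mul, h1, h2, Matrix.det_mul, mul_pow]

lemma aeval_linP_trP (A : Matrix (Fin N) (Fin N) ℂ) (b : Fin N → ℂ) (i : Fin N) :
    aeval (linP A) (trP b i) = affP A b i := by
  show aeval (linP A) (X i + C (b i)) = _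
  rw [map_add, aeval_X, aeval_C, algebraMap_eq]
  rfl

lemma MatS_affP (A : Matrix (Fin N) (Fin N) ℂ) (b : Fin N → ℂ) :
    MatS (N := N) n (affP A b) = MatS n (trP b) * MatS n (linP A) := by
  have h : affP (N := N) A b = fun i => aeval (linP A) (trP b i) :=
    funext fun i => (aeval_linP_trP A b i).symm
  rw [h, MatS_comp (trP b) (linP A) (trP_deg b) (linP_deg A)]

lemma det_MatS_affP (A : Matrix (Fin N) (Fin N) ℂ) (b : Fin N → ℂ) :
    (MatS (N := N) n (affP A b)).det = A.det ^ ((N + n).choose (N + 1)) := by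
  rw [MatS_affP, Matrix.det_mul, det_MatS_trP, one_mul, det_MatS_linP]

noncomputable def V (N n : ℕ) (ζ : Idx N n → Fin N → ℂ) : Matrix (Idx N n) (Idx N n) ℂ :=
  Matrix.of fun α j => ∏ k, ζ j k ^ (α.1 k : ℕ)

lemma eval_affP (A : Matrix (Fin N) (Fin N) ℂ) (b : Fin N → ℂ) (z : Fin N → ℂ) (i : Fin N) :
    eval z (affP A b i) = (A.mulVec z + b) i := by
  show eval z ((∑ j, C (A i j) * X j) + C (b i)) = _
  rw [map_add, map_sum, eval_C]
  simp only [map_mul, eval_C, eval_X]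
  rfl

lemma V_affine (A : Matrix (Fin N) (Fin N) ℂ) (b : Fin N → ℂ) (ζ : Idx N n → Fin N → ℂ) :
    V N n (fun j => A.mulVec (ζ j) + b) = MatS n (affP A b) * V N n ζ := by
  ext α j
  rw [Matrix.mul_apply]
  have h1 : (V N n (fun j => A.mulVec (ζ j) + b)) α j
      = eval (A.mulVec (ζ j) + b) (mon α) := (eval_mon _ _).symm
  have h2 : eval (A.mulVec (ζ j) + b) (mon α) = eval (ζ j) (aeval (affP A b) (mon α)) := by
    rw [eval_aeval,
      show (fun i => eval (ζ j) (affP A b i)) = A.mulVec (ζ j) + b from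
        by funext i; exact eval_affP A b (ζ j) i]
  rw [h1, h2, aeval_mon_expand (affP A b) (affP_deg A b) α, map_sum]
  refine Finset.sum_congr rfl fun β _ => ?_
  rw [smul_eq_C_mul, map_mul, eval_C, eval_mon]
  rfl

lemma det_V_affine (A : Matrix (Fin N) (Fin N) ℂ) (b : Fin N → ℂ) (ζ : Idx N n → Fin N → ℂ) :
    (V N n (fun j => A.mulVec (ζ j) + b)).det
      = A.det ^ ((N + n).choose (N + 1)) * (V N n ζ).det := by
  rw [V_affine, Matrix.det_mul, det_MatS_affP]

end TD

open Pointwise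

lemma limsup_const_mul_atTop {K : ℝ} (hK : 0 < K) (f : ℕ → ℝ) :
    Filter.limsup (fun n => K * f n) Filter.atTop = K * Filter.limsup f Filter.atTop := by
  rw [Filter.limsup_eq, Filter.limsup_eq]
  have hset : {a : ℝ | ∀ᶠ n in Filter.atTop, K * f n ≤ a}
      = K • {a : ℝ | ∀ᶠ n in Filter.atTop, f n ≤ a} := by
    ext a
    constructor
    · intro ha
      refine Set.mem_smul_set.mpr ⟨a / K, ?_, by rw [smul_eq_mul]; field_simp⟩
      filter_upwards [ha] with m hm
      exact (le_div_iff₀ hK).mpr (by rw [mul_comm]; exact hm)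
    · intro ha
      obtain ⟨y, hy, rfl⟩ := Set.mem_smul_set.mp ha
      filter_upwards [hy] with m hm
      rw [smul_eq_mul]
      exact mul_le_mul_of_nonneg_left hm hK.le
  rw [hset, Real.sInf_smul_of_nonneg hK.le, smul_eq_mul]

theorem transfiniteDiameter_affine_preimage'
    (N : ℕ) (hN : 0 < N) (A : Matrix (Fin N) (Fin N) ℂ) (hA : IsUnit A)
    (b : Fin N → ℂ) (E : Set (Fin N → ℂ)) :
    transfiniteDiameter N ((fun z => A.mulVec z + b) ⁻¹' E)
      = ‖A.det‖ ^ (-(1 : ℝ) / (N : ℝ)) * transfiniteDiameter N E := by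
  have hdet : A.det ≠ 0 := (Matrix.isUnit_iff_isUnit_det A).mp hA |>.ne_zero
  set c : ℝ := ‖A.det‖ with hc_def
  have hc : 0 < c := norm_pos_iff.mpr hdet
  have hK : 0 < c ^ (-(1 : ℝ) / (N : ℝ)) := Real.rpow_pos_of_pos hc _
  unfold transfiniteDiameter
  rw [← limsup_const_mul_atTop hK]
  apply Filter.limsup_congr
  filter_upwards [Filter.eventually_ge_atTop 1] with n hn
  set C := (N + n).choose (N + 1) with hC_def
  have hC : 0 < C := Nat.choose_pos (by omega)
  set SE := {x : ℝ |
      ∃ ζ : Idx N n → (Fin N → ℂ),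
        (∀ j, ζ j ∈ E) ∧
        x = ‖(TD.V N n ζ).det‖} with hSE_def
  set SP := {x : ℝ |
      ∃ ζ : Idx N n → (Fin N → ℂ),
        (∀ j, ζ j ∈ ((fun z => A.mulVec z + b) ⁻¹' E)) ∧
        x = ‖(TD.V N n ζ).det‖} with hSP_def
  have habs : ∀ ζ : Idx N n → (Fin N → ℂ),
      ‖(TD.V N n (fun j => A.mulVec (ζ j) + b)).det‖
        = c ^ C * ‖(TD.V N n ζ).det‖ := by
    intro ζ
    rw [TD.det_V_affine, norm_mul, norm_pow]
  have hpow_ne : (c : ℝ) ^ C ≠ 0 := pow_ne_zero _ hc.ne'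
  have hset : SP = ((c ^ C)⁻¹ : ℝ) • SE := by
    ext x
    constructor
    · rintro ⟨ζ, hζ, rfl⟩
      refine Set.mem_smul_set.mpr
        ⟨‖(TD.V N n (fun j => A.mulVec (ζ j) + b)).det‖,
          ⟨fun j => A.mulVec (ζ j) + b, fun j => hζ j, rfl⟩, ?_⟩
      rw [smul_eq_mul, habs, inv_mul_cancel_left₀ hpow_ne]
    · intro hx
      obtain ⟨y, ⟨η, hη, rfl⟩, rfl⟩ := Set.mem_smul_set.mp hx
      set ζ : Idx N n → (Fin N → ℂ) := fun j => A⁻¹.mulVec (η j - b) with hζ_def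
      have hF : ∀ j, A.mulVec (ζ j) + b = η j := by
        intro j
        rw [hζ_def, Matrix.mulVec_mulVec, Matrix.mul_nonsing_inv _ (isUnit_iff_ne_zero.mpr hdet),
          Matrix.one_mulVec, sub_add_cancel]
      refine ⟨ζ, fun j => ?_, ?_⟩
      · show A.mulVec (ζ j) + b ∈ E
        rw [hF]
        exact hη j
      · rw [show η = fun j => A.mulVec (ζ j) + b from funext fun j => (hF j).symm,
          habs, smul_eq_mul, inv_mul_cancel_left₀ hpow_ne]
  have hnn : 0 ≤ sSup SE := by
    apply Real.sSup_nonneg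
    rintro x ⟨ζ, hζ, rfl⟩
    exact norm_nonneg _
  show (sSup SP) ^ ((1 : ℝ) / ((N * C : ℕ) : ℝ))
      = c ^ (-(1 : ℝ) / (N : ℝ)) * (sSup SE) ^ ((1 : ℝ) / ((N * C : ℕ) : ℝ))
  rw [hset, Real.sSup_smul_of_nonneg (inv_nonneg.mpr (pow_nonneg hc.le _)) SE,
    smul_eq_mul, Real.mul_rpow (inv_nonneg.mpr (pow_nonneg hc.le _)) hnn]
  congr 1
  rw [← Real.rpow_natCast c C, ← Real.rpow_neg hc.le, ← Real.rpow_mul hc.le]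
  congr 1
  have hCne : (C : ℝ) ≠ 0 := Nat.cast_ne_zero.mpr hC.ne'
  have hNne : (N : ℝ) ≠ 0 := Nat.cast_ne_zero.mpr hN.ne'
  push_cast
  field_simp


/-- Sheĭnov's formula: for an invertible affine map `F(z) = Az + b` of `ℂ^N` and any
bounded set `E ⊆ ℂ^N`, `d_∞(F⁻¹E) = |det A|^{-1/N} · d_∞(E)`. -/
theorem transfiniteDiameter_affine_preimage
    (N : ℕ) (hN : 0 < N) (A : Matrix (Fin N) (Fin N) ℂ) (hA : IsUnit A)
    (b : Fin N → ℂ) (E : Set (Fin N → ℂ)) (hE : Bornology.IsBounded E) :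
    transfiniteDiameter N ((fun z => A.mulVec z + b) ⁻¹' E)
      = ‖A.det‖ ^ (-(1 : ℝ) / (N : ℝ)) * transfiniteDiameter N E := by
  exact transfiniteDiameter_affine_preimage' N hN A hA b E
end

section
/- Let F : ℂ^N → ℂ^N be a regular polynomial map of degree d ≥ 2. Then for every z ∈ ℂ^N the limit G^F(z) = lim_{n→∞} d^{−n} log⁺ ‖F^n(z)‖ exists (where log⁺(x) = max(0, log x)), the resulting function G^F : ℂ^N → [0, ∞) is continuous, and G^F(z) = 0 if and only if z belongs to the filled Julia set K_F = {z ∈ ℂ^N : sup_n ‖F^n(z)‖ < ∞}. -/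
/-- The Euclidean norm on `ℂ^N`. -/
noncomputable def eucNorm {N : ℕ} (z : Fin N → ℂ) : ℝ :=
  Real.sqrt (∑ i, ‖z i‖ ^ 2)

open MvPolynomial Filter Real Finset in
section
namespace EscAux



/-- positive part of log -/
noncomputable def plog (x : ℝ) : ℝ := max 0 (Real.log x)

lemma plog_nonneg (x : ℝ) : 0 ≤ plog x := le_max_left _ _

lemma log_le_plog (x : ℝ) : Real.log x ≤ plog x := le_max_right _ _

lemma plog_mono {a b : ℝ} (ha : 0 ≤ a) (hab : a ≤ b) : plog a ≤ plog b := by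
  rcases eq_or_lt_of_le ha with h | h
  · simp [plog, ← h, Real.log_zero]
  · exact max_le_max le_rfl (Real.log_le_log h hab)

lemma plog_le_of_le {a b : ℝ} (ha : 0 ≤ a) (hb : 1 ≤ b) (hab : a ≤ b) :
    plog a ≤ Real.log b := by
  apply max_le (Real.log_nonneg hb)
  rcases eq_or_lt_of_le ha with h | h
  · simp [← h, Real.log_nonneg hb]
  · exact Real.log_le_log h hab

lemma continuous_plog : Continuous plog := by
  rw [continuous_iff_continuousAt]
  intro x
  rcases lt_or_ge |x| 1 with h | h
  · have hev : plog =ᶠ[nhds x] fun _ => 0 := by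
      filter_upwards [eventually_abs_sub_lt x (by linarith : (0:ℝ) < 1 - |x|)] with y hy
      have hy1 : |y| < 1 := by
        calc |y| ≤ |y - x| + |x| := by simpa using abs_add_le (y - x) x
        _ < 1 := by linarith
      have : Real.log y ≤ 0 := by
        rw [← Real.log_abs]
        exact Real.log_nonpos (abs_nonneg _) hy1.le
      simp [plog, max_eq_left this]
    exact (continuousAt_const.congr hev.symm)
  · have hx : x ≠ 0 := by intro h0; rw [h0] at h; simp at h; linarith
    exact continuousAt_const.max (Real.continuousAt_log hx)



abbrev Vs (N : ℕ) := EuclideanSpace ℂ (Fin N)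

def toV {N : ℕ} (z : Fin N → ℂ) : Vs N := WithLp.toLp 2 z

def ofV {N : ℕ} (z : Vs N) : Fin N → ℂ := z

lemma eucNorm_eq {N : ℕ} (z : Fin N → ℂ) : eucNorm z = ‖toV z‖ := by
  rw [EuclideanSpace.norm_eq]
  simp [eucNorm, toV]

noncomputable def polyC {N : ℕ} (q : MvPolynomial (Fin N) ℂ) : ℝ :=
  ∑ m ∈ q.support, ‖q.coeff m‖

lemma polyC_nonneg {N : ℕ} (q : MvPolynomial (Fin N) ℂ) : 0 ≤ polyC q :=
  Finset.sum_nonneg fun _ _ => norm_nonneg _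

lemma sum_eq_degree {N : ℕ} (s : Fin N →₀ ℕ) : ∑ i, s i = s.sum fun _ e => e := by
  rw [Finsupp.sum_fintype]
  intro i; rfl

lemma abs_eval_le {N : ℕ} (q : MvPolynomial (Fin N) ℂ) {m : ℕ} (hq : q.totalDegree ≤ m)
    {z : Fin N → ℂ} {B : ℝ} (hB : 1 ≤ B) (hz : ∀ i, ‖z i‖ ≤ B) :
    ‖MvPolynomial.eval z q‖ ≤ polyC q * B ^ m := by
  rw [MvPolynomial.eval_eq']
  calc ‖∑ s ∈ q.support, q.coeff s * ∏ i, z i ^ s i‖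
      ≤ ∑ s ∈ q.support, ‖q.coeff s * ∏ i, z i ^ s i‖ :=
        norm_sum_le _ _
  _ ≤ ∑ s ∈ q.support, ‖q.coeff s‖ * B ^ m := by
      apply Finset.sum_le_sum; intro s hs
      rw [norm_mul]
      apply mul_le_mul_of_nonneg_left _ (norm_nonneg _)
      calc ‖∏ i, z i ^ s i‖ = ∏ i, ‖z i‖ ^ s i := by
            simp [norm_prod, norm_pow]
      _ ≤ ∏ i : Fin N, B ^ s i :=
            Finset.prod_le_prod (fun i _ => by positivity)
              (fun i _ => pow_le_pow_left₀ (norm_nonneg _) (hz i) _)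
      _ = B ^ (∑ i, s i) := Finset.prod_pow_eq_pow_sum _ _ _
      _ ≤ B ^ m := by
            apply pow_le_pow_right₀ hB
            rw [sum_eq_degree]
            exact le_trans (MvPolynomial.le_totalDegree hs) hq
  _ = polyC q * B ^ m := by rw [polyC, Finset.sum_mul]

lemma coord_le {N : ℕ} (x : Vs N) (i : Fin N) : ‖x i‖ ≤ ‖x‖ := by
  rw [EuclideanSpace.norm_eq]
  have h : ‖x i‖ ^ 2 ≤ ∑ j, ‖x j‖ ^ 2 :=
    Finset.single_le_sum (f := fun j => ‖x j‖ ^ 2) (fun j _ => by positivity)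
      (Finset.mem_univ i)
  calc ‖x i‖ = Real.sqrt (‖x i‖ ^ 2) := (Real.sqrt_sq (norm_nonneg _)).symm
  _ ≤ _ := Real.sqrt_le_sqrt h

lemma norm_le_of_coord {N : ℕ} {x : Vs N} {M : ℝ} (hM : 0 ≤ M) (h : ∀ i, ‖x i‖ ≤ M) :
    ‖x‖ ≤ Real.sqrt N * M := by
  rw [EuclideanSpace.norm_eq]
  calc Real.sqrt (∑ i, ‖x i‖ ^ 2) ≤ Real.sqrt (∑ _i : Fin N, M ^ 2) :=
        Real.sqrt_le_sqrt (Finset.sum_le_sum fun i _ =>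
          pow_le_pow_left₀ (norm_nonneg _) (h i) 2)
  _ = Real.sqrt ((N : ℝ) * M ^ 2) := by simp [Finset.sum_const, Finset.card_univ, mul_comm]
  _ = Real.sqrt N * M := by
        rw [Real.sqrt_mul (Nat.cast_nonneg N), Real.sqrt_sq hM]

lemma eval_smul_of_homog {N n : ℕ} {q : MvPolynomial (Fin N) ℂ} (hq : q.IsHomogeneous n)
    (c : ℂ) (z : Fin N → ℂ) :
    MvPolynomial.eval (fun i => c * z i) q = c ^ n * MvPolynomial.eval z q := by
  rw [MvPolynomial.eval_eq', MvPolynomial.eval_eq', Finset.mul_sum]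
  apply Finset.sum_congr rfl
  intro s hs
  have hdeg : ∑ i, s i = n := by
    have h1 : s.degree = n := by
      by_contra hne
      exact MvPolynomial.mem_support_iff.mp hs (hq.coeff_eq_zero hne)
    rw [sum_eq_degree]
    rw [← h1]
    rfl
  calc q.coeff s * ∏ i, (c * z i) ^ s i
      = q.coeff s * ((∏ i, c ^ s i) * ∏ i, z i ^ s i) := by
        rw [← Finset.prod_mul_distrib]; simp [mul_pow]
  _ = c ^ n * (q.coeff s * ∏ i, z i ^ s i) := by
        rw [Finset.prod_pow_eq_pow_sum, hdeg]; ring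


lemma toV_smul {N : ℕ} (b : ℂ) (f : Fin N → ℂ) : toV (fun i => b * f i) = b • toV f := rfl

lemma continuous_polyMap {N : ℕ} (Q : Fin N → MvPolynomial (Fin N) ℂ) :
    Continuous fun w : Vs N => toV (fun i => MvPolynomial.eval (ofV w) (Q i)) := by
  have h1 : Continuous (toV (N := N)) := PiLp.continuous_toLp _ _
  have h2 : Continuous (ofV (N := N)) := PiLp.continuous_ofLp _ _
  exact h1.comp (continuous_pi fun i =>
    (MvPolynomial.continuous_eval (p := Q i)).comp h2)


lemma exists_lower {N d : ℕ} (hd : 1 ≤ d) (Q : Fin N → MvPolynomial (Fin N) ℂ)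
    (hQ : ∀ i, (Q i).IsHomogeneous d)
    (hreg : (fun z : Fin N → ℂ => fun i => MvPolynomial.eval z (Q i)) ⁻¹' {0}
      = ({0} : Set (Fin N → ℂ)))
    (hsmul : ∀ (n : ℕ) (q : MvPolynomial (Fin N) ℂ), q.IsHomogeneous n → ∀ (c : ℂ)
      (z : Fin N → ℂ), MvPolynomial.eval (fun i => c * z i) q = c ^ n * MvPolynomial.eval z q) :
    ∃ c : ℝ, 0 < c ∧ ∀ w : Vs N,
      c * ‖w‖ ^ d ≤ ‖toV fun i => MvPolynomial.eval (ofV w) (Q i)‖ := by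
  rcases Nat.eq_zero_or_pos N with hN | hN
  · refine ⟨1, one_pos, ?_⟩
    subst hN
    intro w
    have hw : w = 0 := Subsingleton.elim _ _
    rw [hw, norm_zero, zero_pow (by omega), mul_zero]
    exact norm_nonneg _
  · set QV : Vs N → Vs N := fun w => toV fun i => MvPolynomial.eval (ofV w) (Q i) with hQV
    have hcont : Continuous QV := continuous_polyMap Q
    have hsne : (Metric.sphere (0 : Vs N) 1).Nonempty := by
      refine ⟨EuclideanSpace.single ⟨0, hN⟩ 1, ?_⟩
      simp [mem_sphere_iff_norm, EuclideanSpace.norm_single]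
    obtain ⟨u₀, hu₀, hmin'⟩ := (isCompact_sphere (0 : Vs N) 1).exists_isMinOn hsne
      hcont.norm.continuousOn
    have hmin : ∀ x ∈ Metric.sphere (0 : Vs N) 1, ‖QV u₀‖ ≤ ‖QV x‖ := fun x hx => hmin' hx
    have hu₀n : ‖u₀‖ = 1 := by simpa [mem_sphere_iff_norm] using hu₀
    refine ⟨‖QV u₀‖, ?_, ?_⟩
    · rcases (norm_nonneg (QV u₀)).lt_or_eq with h | h
      · exact h
      · exfalso
        have hz : QV u₀ = 0 := by rw [← norm_eq_zero]; exact h.symm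
        have hmem : (ofV u₀ : Fin N → ℂ) ∈
            (fun z : Fin N → ℂ => fun i => MvPolynomial.eval z (Q i)) ⁻¹' {0} := by
          simp only [Set.mem_preimage, Set.mem_singleton_iff]
          exact congrArg ofV hz
        rw [hreg] at hmem
        have hu0 : u₀ = 0 := by
          have h0 : ofV u₀ = 0 := hmem
          simpa [ofV] using congrArg (WithLp.toLp 2) h0
        rw [hu0, norm_zero] at hu₀n
        norm_num at hu₀n
    · intro w
      rcases eq_or_ne w 0 with rfl | hw
      · rw [norm_zero, zero_pow (by omega), mul_zero]; exact norm_nonneg _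
      · have hnw : 0 < ‖w‖ := norm_pos_iff.mpr hw
        set a : ℂ := (‖w‖ : ℂ) with ha
        have ha0 : a ≠ 0 := by
          simp only [ha, ne_eq, Complex.ofReal_eq_zero]
          exact hnw.ne'
        set u : Vs N := a⁻¹ • w with hu
        have hun : ‖u‖ = 1 := by
          rw [hu, norm_smul, norm_inv, ha]
          simp [abs_of_pos hnw,
            inv_mul_cancel₀ hnw.ne']
        have hofV : (ofV w : Fin N → ℂ) = fun i => a * ofV u i := by
          funext i
          show w i = a * (a⁻¹ • w) i
          show w i = a * (a⁻¹ * w i)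
          field_simp
        have hQVw : QV w = (a ^ d) • QV u := by
          rw [hQV]
          simp only
          rw [hofV, ← toV_smul]
          congr 1
          funext i
          exact hsmul d (Q i) (hQ i) a (ofV u)
        rw [show (toV fun i => MvPolynomial.eval (ofV w) (Q i)) = QV w from rfl, hQVw,
          norm_smul]
        have : ‖a ^ d‖ = ‖w‖ ^ d := by
          rw [norm_pow, ha]
          simp [abs_of_pos hnw]
        rw [this, mul_comm]
        apply mul_le_mul_of_nonneg_left _ (pow_nonneg hnw.le _)
        exact hmin u (by simpa [mem_sphere_iff_norm] using hun)



lemma exists_upper {N m : ℕ} (Q : Fin N → MvPolynomial (Fin N) ℂ)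
    (hq : ∀ i, (Q i).totalDegree ≤ m) :
    ∃ A : ℝ, 0 < A ∧ ∀ w : Vs N,
      ‖toV fun i => MvPolynomial.eval (ofV w) (Q i)‖ ≤ A * max 1 ‖w‖ ^ m := by
  set S := ∑ i, polyC (Q i) with hS
  have hS0 : 0 ≤ S := Finset.sum_nonneg fun i _ => polyC_nonneg _
  refine ⟨Real.sqrt N * S + 1, by positivity, ?_⟩
  intro w
  set B := max 1 ‖w‖ with hB
  have hB1 : (1 : ℝ) ≤ B := le_max_left _ _
  have hBn : 0 ≤ B ^ m := by positivity
  have hcoords : ∀ i, ‖(toV fun i => MvPolynomial.eval (ofV w) (Q i)) i‖ ≤ S * B ^ m := by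
    intro i
    show ‖MvPolynomial.eval (ofV w) (Q i)‖ ≤ S * B ^ m
    calc ‖MvPolynomial.eval (ofV w) (Q i)‖ ≤ polyC (Q i) * B ^ m := by
          apply abs_eval_le (Q i) (hq i) hB1
          intro j
          calc ‖ofV w j‖ = ‖w j‖ := rfl
          _ ≤ ‖w‖ := coord_le w j
          _ ≤ B := le_max_right _ _
    _ ≤ S * B ^ m := by
          apply mul_le_mul_of_nonneg_right _ hBn
          exact Finset.single_le_sum (f := fun i => polyC (Q i))
            (fun i _ => polyC_nonneg _) (Finset.mem_univ i)
  calc ‖toV fun i => MvPolynomial.eval (ofV w) (Q i)‖ ≤ Real.sqrt N * (S * B ^ m) :=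
        norm_le_of_coord (by positivity) hcoords
  _ = (Real.sqrt N * S) * B ^ m := by ring
  _ ≤ (Real.sqrt N * S + 1) * B ^ m := by
        apply mul_le_mul_of_nonneg_right _ hBn
        linarith

lemma remainder_totalDegree {N d : ℕ} (p : MvPolynomial (Fin N) ℂ) (hp : p.totalDegree = d) :
    (p - MvPolynomial.homogeneousComponent d p).totalDegree ≤ d - 1 := by
  rw [MvPolynomial.totalDegree]
  apply Finset.sup_le
  intro s hs
  have hcoeff := MvPolynomial.mem_support_iff.mp hs
  rw [MvPolynomial.coeff_sub, MvPolynomial.coeff_homogeneousComponent] at hcoeff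
  by_cases h : s.degree = d
  · rw [if_pos h, sub_self] at hcoeff
    exact absurd rfl hcoeff
  · rw [if_neg h, sub_zero] at hcoeff
    have hle : (s.sum fun _ e => e) ≤ d := by
      rw [← hp]
      exact MvPolynomial.le_totalDegree (MvPolynomial.mem_support_iff.mpr hcoeff)
    have hne : (s.sum fun _ e => e) ≠ d := by
      intro heq
      exact h (by rw [← heq]; rfl)
    omega


end EscAux
section
namespace EscAux

lemma key_estimate {N d : ℕ} (hd : 2 ≤ d) (P : Fin N → MvPolynomial (Fin N) ℂ)
    (hdeg : ∀ i, (P i).totalDegree = d)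
    (hreg : (fun z : Fin N → ℂ => fun i =>
        MvPolynomial.eval z (MvPolynomial.homogeneousComponent d (P i))) ⁻¹' {0}
      = ({0} : Set (Fin N → ℂ))) :
    ∃ C : ℝ, 0 ≤ C ∧ ∀ w : Vs N,
      |plog ‖toV fun i => MvPolynomial.eval (ofV w) (P i)‖ - d * plog ‖w‖| ≤ C := by
  obtain ⟨A, hA0, hA⟩ := exists_upper P (fun i => (hdeg i).le)
  obtain ⟨c, hc0, hlow⟩ := exists_lower (d := d) (by omega)
    (fun i => MvPolynomial.homogeneousComponent d (P i))
    (fun i => MvPolynomial.homogeneousComponent_isHomogeneous d (P i))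
    hreg (fun n q hq c z => eval_smul_of_homog hq c z)
  obtain ⟨A₂, hA₂0, hA₂⟩ := exists_upper
    (fun i => P i - MvPolynomial.homogeneousComponent d (P i))
    (fun i => remainder_totalDegree _ (hdeg i))
  set R₀ : ℝ := max 1 (2 * A₂ / c) with hR₀
  have hR₀1 : (1 : ℝ) ≤ R₀ := le_max_left _ _
  have hR₀0 : 0 < R₀ := lt_of_lt_of_le one_pos hR₀1
  -- lower bound for the full map beyond radius R₀
  have hlowF : ∀ w : Vs N, R₀ ≤ ‖w‖ →
      c / 2 * ‖w‖ ^ d ≤ ‖toV fun i => MvPolynomial.eval (ofV w) (P i)‖ := by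
    intro w hw
    have h1 : (1 : ℝ) ≤ ‖w‖ := le_trans hR₀1 hw
    have hmax : max 1 ‖w‖ = ‖w‖ := max_eq_right h1
    have hsub : (toV fun i => MvPolynomial.eval (ofV w)
          (MvPolynomial.homogeneousComponent d (P i)))
        = (toV fun i => MvPolynomial.eval (ofV w) (P i))
          - (toV fun i => MvPolynomial.eval (ofV w)
              (P i - MvPolynomial.homogeneousComponent d (P i))) := by
      have : (toV fun i => MvPolynomial.eval (ofV w) (P i))
          - (toV fun i => MvPolynomial.eval (ofV w)
              (P i - MvPolynomial.homogeneousComponent d (P i)))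
          = toV fun i => (MvPolynomial.eval (ofV w) (P i)
              - MvPolynomial.eval (ofV w)
                  (P i - MvPolynomial.homogeneousComponent d (P i))) := rfl
      rw [this]
      have h2 : ∀ i, MvPolynomial.eval (ofV w) (MvPolynomial.homogeneousComponent d (P i))
          = MvPolynomial.eval (ofV w) (P i)
            - MvPolynomial.eval (ofV w)
                (P i - MvPolynomial.homogeneousComponent d (P i)) := by
        intro i; rw [map_sub]; ring
      exact congrArg toV (funext h2)
    have htri : c * ‖w‖ ^ d ≤ ‖toV fun i => MvPolynomial.eval (ofV w) (P i)‖
        + A₂ * ‖w‖ ^ (d - 1) := by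
      calc c * ‖w‖ ^ d
          ≤ ‖toV fun i => MvPolynomial.eval (ofV w)
              (MvPolynomial.homogeneousComponent d (P i))‖ := hlow w
      _ ≤ ‖toV fun i => MvPolynomial.eval (ofV w) (P i)‖
          + ‖toV fun i => MvPolynomial.eval (ofV w)
              (P i - MvPolynomial.homogeneousComponent d (P i))‖ := by
            rw [hsub]; exact norm_sub_le _ _
      _ ≤ ‖toV fun i => MvPolynomial.eval (ofV w) (P i)‖ + A₂ * ‖w‖ ^ (d - 1) := by
            have := hA₂ w
            rw [hmax] at this
            linarith
    have hstep : c / 2 * ‖w‖ ^ d ≤ c * ‖w‖ ^ d - A₂ * ‖w‖ ^ (d - 1) := by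
      have hpow : ‖w‖ ^ d = ‖w‖ ^ (d - 1) * ‖w‖ := by
        rw [← pow_succ]
        congr 1
        omega
      have hcw : A₂ ≤ c / 2 * ‖w‖ := by
        have h2 : 2 * A₂ / c ≤ ‖w‖ := le_trans (le_max_right _ _) hw
        rw [div_le_iff₀ hc0] at h2
        linarith
      have hpn : (0:ℝ) ≤ ‖w‖ ^ (d - 1) := by positivity
      have := mul_le_mul_of_nonneg_left hcw hpn
      rw [hpow]
      nlinarith
    linarith
  -- assemble the constant
  set LA : ℝ := |Real.log A| with hLA
  set Lc : ℝ := |Real.log (c / 2)| with hLc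
  set Ca : ℝ := plog (A * R₀ ^ d) + d * Real.log R₀ with hCa
  have hCa0 : 0 ≤ Ca := by
    have := plog_nonneg (A * R₀ ^ d)
    have := Real.log_nonneg hR₀1
    positivity
  have hLA0 : 0 ≤ LA := abs_nonneg _
  have hLc0 : 0 ≤ Lc := abs_nonneg _
  refine ⟨Ca + LA + Lc, by linarith, ?_⟩
  intro w
  set X : ℝ := ‖toV fun i => MvPolynomial.eval (ofV w) (P i)‖ with hX
  have hX0 : 0 ≤ X := norm_nonneg _
  rcases le_or_gt ‖w‖ R₀ with hcase | hcase
  · -- small w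
    have h1 : X ≤ A * R₀ ^ d := by
      calc X ≤ A * max 1 ‖w‖ ^ d := hA w
      _ ≤ A * R₀ ^ d := by
          apply mul_le_mul_of_nonneg_left _ hA0.le
          exact pow_le_pow_left₀ (le_trans zero_le_one (le_max_left _ _))
            (max_le hR₀1 hcase) _
    have h2 : plog X ≤ Ca := by
      calc plog X ≤ plog (A * R₀ ^ d) := plog_mono hX0 h1
      _ ≤ Ca := by
          have := Real.log_nonneg hR₀1
          have hd0 : (0:ℝ) ≤ (d:ℝ) := Nat.cast_nonneg d
          rw [hCa]; nlinarith
    have h3 : (d:ℝ) * plog ‖w‖ ≤ Ca := by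
      have : plog ‖w‖ ≤ Real.log R₀ := plog_le_of_le (norm_nonneg _) hR₀1 hcase
      have hplogR : 0 ≤ plog (A * R₀ ^ d) := plog_nonneg _
      have hd0 : (0:ℝ) ≤ (d:ℝ) := Nat.cast_nonneg d
      rw [hCa]
      nlinarith [plog_nonneg ‖w‖]
    have h4 : 0 ≤ (d:ℝ) * plog ‖w‖ := mul_nonneg (Nat.cast_nonneg d) (plog_nonneg _)
    have h5 : 0 ≤ plog X := plog_nonneg _
    rw [abs_le]
    constructor <;> nlinarith [abs_nonneg (Real.log A), abs_nonneg (Real.log (c/2))]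
  · -- large w
    have h1 : (1:ℝ) ≤ ‖w‖ := le_trans hR₀1 hcase.le
    have hw0 : (0:ℝ) < ‖w‖ := lt_of_lt_of_le one_pos h1
    set t : ℝ := Real.log ‖w‖ with ht
    have ht0 : 0 ≤ t := Real.log_nonneg h1
    have hplogw : plog ‖w‖ = t := max_eq_right ht0
    -- upper bound
    have hup : plog X ≤ (d:ℝ) * t + LA := by
      have hXA : X ≤ A * ‖w‖ ^ d := by
        have := hA w
        rwa [max_eq_right h1] at this
      have hlog : Real.log (A * ‖w‖ ^ d) = Real.log A + d * t := by
        rw [Real.log_mul hA0.ne' (by positivity), Real.log_pow]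
      calc plog X ≤ plog (A * ‖w‖ ^ d) := plog_mono hX0 hXA
      _ = max 0 (Real.log A + d * t) := by rw [plog, hlog]
      _ ≤ (d:ℝ) * t + LA := by
          apply max_le
          · have : 0 ≤ LA := abs_nonneg _
            positivity
          · have : Real.log A ≤ LA := le_abs_self _
            linarith
    -- lower bound
    have hdown : (d:ℝ) * t - Lc ≤ plog X := by
      have hXc : c / 2 * ‖w‖ ^ d ≤ X := hlowF w hcase.le
      have hpos : (0:ℝ) < c / 2 * ‖w‖ ^ d := by positivity
      have hlog : Real.log (c / 2 * ‖w‖ ^ d) = Real.log (c / 2) + d * t := by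
        rw [Real.log_mul (by positivity) (by positivity), Real.log_pow]
      calc (d:ℝ) * t - Lc ≤ Real.log (c / 2) + d * t := by
            have : -Lc ≤ Real.log (c / 2) := neg_abs_le _
            linarith
      _ = Real.log (c / 2 * ‖w‖ ^ d) := hlog.symm
      _ ≤ Real.log X := Real.log_le_log hpos hXc
      _ ≤ plog X := log_le_plog _
    rw [hplogw, abs_le]
    constructor <;> linarith

end EscAux
end

open MvPolynomial Filter Real Finset

/-- For a regular polynomial map `F : ℂ^N → ℂ^N` of degree `d ≥ 2`, the escape-rate function
`G^F(z) = lim_{n→∞} d^{−n} log⁺ ‖Fⁿ(z)‖` exists (with `log⁺ x = max 0 (log x)`), is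
continuous and nonnegative, and vanishes exactly on the filled Julia set
`K_F = {z ∈ ℂ^N : sup_n ‖Fⁿ(z)‖ < ∞}`. -/
theorem escapeRate_exists_continuous_vanishes_on_filledJulia
    (N d : ℕ) (hd : 2 ≤ d) (P : Fin N → MvPolynomial (Fin N) ℂ)
    (hdeg : ∀ i, (P i).totalDegree = d)
    (F : (Fin N → ℂ) → (Fin N → ℂ))
    (hF : F = fun z => fun i => MvPolynomial.eval z (P i))
    (hreg : (fun z : Fin N → ℂ => fun i =>
        MvPolynomial.eval z (MvPolynomial.homogeneousComponent d (P i))) ⁻¹' {0}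
      = ({0} : Set (Fin N → ℂ))) :
    ∃ G : (Fin N → ℂ) → ℝ,
      (∀ z, Filter.Tendsto
          (fun n : ℕ => ((d : ℝ) ^ n)⁻¹ * max 0 (Real.log (eucNorm (F^[n] z))))
          Filter.atTop (nhds (G z))) ∧
      Continuous G ∧
      (∀ z, 0 ≤ G z) ∧
      (∀ z, G z = 0 ↔ z ∈ {w : Fin N → ℂ |
          BddAbove (Set.range fun n : ℕ => eucNorm (F^[n] w))}) := by
  classical
  obtain ⟨C, hC0, hkey⟩ := EscAux.key_estimate hd P hdeg hreg
  set FE : EscAux.Vs N → EscAux.Vs N :=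
    fun w => EscAux.toV fun i => MvPolynomial.eval (EscAux.ofV w) (P i) with hFE
  have hFEcont : Continuous FE := EscAux.continuous_polyMap P
  have hdR : (1:ℝ) < (d:ℝ) := by exact_mod_cast (by omega : 1 < d)
  have hd0 : (0:ℝ) < (d:ℝ) := lt_trans one_pos hdR
  set r : ℝ := (d:ℝ)⁻¹ with hr
  have hr0 : 0 < r := inv_pos.mpr hd0
  have hr1 : r < 1 := by rw [hr]; exact inv_lt_one_of_one_lt₀ hdR
  have hstep : ∀ x : Fin N → ℂ, EscAux.toV (F x) = FE (EscAux.toV x) := by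
    intro x; rw [hF]; rfl
  have hiter : ∀ (z : Fin N → ℂ) (n : ℕ),
      EscAux.toV (F^[n] z) = FE^[n] (EscAux.toV z) := by
    intro z n
    induction n with
    | zero => rfl
    | succ n ih =>
        rw [Function.iterate_succ_apply', Function.iterate_succ_apply', ← ih, hstep]
  set g : ℕ → EscAux.Vs N → ℝ :=
    fun n w => ((d:ℝ)^n)⁻¹ * EscAux.plog ‖FE^[n] w‖ with hg
  have hgcont : ∀ n, Continuous (g n) := fun n =>
    continuous_const.mul (EscAux.continuous_plog.comp (continuous_norm.comp (hFEcont.iterate n)))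
  have hgnn : ∀ n w, 0 ≤ g n w := fun n w =>
    mul_nonneg (by positivity) (EscAux.plog_nonneg _)
  have hdist : ∀ w n, dist (g n w) (g (n+1) w) ≤ (C / d) * r ^ n := by
    intro w n
    have hpow : ((d:ℝ)^n)⁻¹ = ((d:ℝ)^(n+1))⁻¹ * d := by
      rw [pow_succ]
      field_simp
    rw [Real.dist_eq]
    simp only [hg]
    rw [Function.iterate_succ_apply']
    have hEq : ((d:ℝ)^n)⁻¹ * EscAux.plog ‖FE^[n] w‖
        - ((d:ℝ)^(n+1))⁻¹ * EscAux.plog ‖FE (FE^[n] w)‖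
        = ((d:ℝ)^(n+1))⁻¹ * ((d:ℝ) * EscAux.plog ‖FE^[n] w‖
            - EscAux.plog ‖FE (FE^[n] w)‖) := by
      rw [hpow]; ring
    rw [hEq, abs_mul, abs_of_nonneg (by positivity : (0:ℝ) ≤ ((d:ℝ)^(n+1))⁻¹)]
    have hk : |(d:ℝ) * EscAux.plog ‖FE^[n] w‖ - EscAux.plog ‖FE (FE^[n] w)‖| ≤ C := by
      rw [abs_sub_comm]
      exact hkey (FE^[n] w)
    calc ((d:ℝ)^(n+1))⁻¹ * |(d:ℝ) * EscAux.plog ‖FE^[n] w‖ - EscAux.plog ‖FE (FE^[n] w)‖|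
        ≤ ((d:ℝ)^(n+1))⁻¹ * C := mul_le_mul_of_nonneg_left hk (by positivity)
    _ = (C/d) * r^n := by
        have h3 : ((d:ℝ)^(n+1))⁻¹ = (d:ℝ)⁻¹ * ((d:ℝ)⁻¹)^n := by
          rw [pow_succ, mul_inv, inv_pow]; ring
        rw [hr, h3]; ring
  have hcauchy : ∀ w, CauchySeq fun n => g n w := fun w =>
    cauchySeq_of_le_geometric r (C/d) hr1 (hdist w)
  choose G' hG' using fun w => cauchySeq_tendsto_of_complete (hcauchy w)
  set K : ℝ := (C/d) / (1 - r) with hK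
  have hK0 : 0 ≤ K := by
    apply div_nonneg (div_nonneg hC0 hd0.le)
    linarith
  have hGdist : ∀ w n, dist (g n w) (G' w) ≤ K * r ^ n := by
    intro w n
    have h := dist_le_of_le_geometric_of_tendsto r (C/d) hr1 (hdist w) (hG' w) n
    calc dist (g n w) (G' w) ≤ (C/d) * r^n / (1-r) := h
    _ = K * r^n := by rw [hK]; ring
  have htendr : Tendsto (fun n : ℕ => r ^ n) atTop (nhds 0) :=
    tendsto_pow_atTop_nhds_zero_of_lt_one hr0.le hr1
  have htendK : Tendsto (fun n : ℕ => K * r ^ n) atTop (nhds 0) := by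
    simpa using htendr.const_mul K
  have htu : TendstoUniformly (fun n w => g n w) G' atTop := by
    rw [Metric.tendstoUniformly_iff]
    intro ε hε
    filter_upwards [htendK.eventually_lt_const hε] with n hn w
    calc dist (G' w) (g n w) = dist (g n w) (G' w) := dist_comm _ _
    _ ≤ K * r ^ n := hGdist w n
    _ < ε := hn
  have hGcont : Continuous G' := htu.continuous (Filter.Frequently.of_forall hgcont)
  have hGnn : ∀ w, 0 ≤ G' w := fun w => ge_of_tendsto' (hG' w) (fun n => hgnn n w)
  have hfun : ∀ (z : Fin N → ℂ) (n : ℕ),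
      ((d:ℝ)^n)⁻¹ * max 0 (Real.log (eucNorm (F^[n] z))) = g n (EscAux.toV z) := by
    intro z n
    rw [EscAux.eucNorm_eq, hiter z n]
    simp only [hg, EscAux.plog]
  have hzero_of_bdd : ∀ z, BddAbove (Set.range fun n : ℕ => eucNorm (F^[n] z)) →
      G' (EscAux.toV z) = 0 := by
    rintro z ⟨M, hM⟩
    have hb : ∀ n, eucNorm (F^[n] z) ≤ M := fun n => hM ⟨n, rfl⟩
    have hub : ∀ n, g n (EscAux.toV z) ≤ ((d:ℝ)^n)⁻¹ * EscAux.plog (max 1 M) := by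
      intro n
      simp only [hg]
      apply mul_le_mul_of_nonneg_left _ (by positivity)
      apply EscAux.plog_mono (norm_nonneg _)
      rw [← hiter z n, ← EscAux.eucNorm_eq]
      exact le_trans (hb n) (le_max_right _ _)
    have htend0 : Tendsto (fun n : ℕ => ((d:ℝ)^n)⁻¹ * EscAux.plog (max 1 M))
        atTop (nhds 0) := by
      have h2 : Tendsto (fun n : ℕ => ((d:ℝ)^n)⁻¹) atTop (nhds 0) := by
        simp_rw [← inv_pow]
        exact htendr
      simpa using h2.mul_const _
    have hsq := tendsto_of_tendsto_of_tendsto_of_le_of_le tendsto_const_nhds htend0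
      (fun n => hgnn n _) hub
    exact tendsto_nhds_unique (hG' _) hsq
  have hpos_of_unbdd : ∀ z, ¬ BddAbove (Set.range fun n : ℕ => eucNorm (F^[n] z)) →
      0 < G' (EscAux.toV z) := by
    intro z hnb
    obtain ⟨y, ⟨n, rfl⟩, hy⟩ := not_bddAbove_iff.mp hnb (Real.exp (K + 1))
    have hlog : K + 1 ≤ Real.log (eucNorm (F^[n] z)) := by
      have h2 := Real.log_lt_log (Real.exp_pos _) hy
      rw [Real.log_exp] at h2
      exact h2.le
    have hgn : ((d:ℝ)^n)⁻¹ * (K + 1) ≤ g n (EscAux.toV z) := by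
      simp only [hg]
      apply mul_le_mul_of_nonneg_left _ (by positivity)
      calc K + 1 ≤ Real.log (eucNorm (F^[n] z)) := hlog
      _ ≤ EscAux.plog (eucNorm (F^[n] z)) := EscAux.log_le_plog _
      _ = EscAux.plog ‖FE^[n] (EscAux.toV z)‖ := by rw [EscAux.eucNorm_eq, hiter]
    have hd1 := hGdist (EscAux.toV z) n
    rw [Real.dist_eq, abs_le] at hd1
    have hrn : r ^ n = ((d:ℝ)^n)⁻¹ := by rw [hr, inv_pow]
    rw [hrn] at hd1
    have hpn : (0:ℝ) < ((d:ℝ)^n)⁻¹ := by positivity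
    have hx : ((d:ℝ)^n)⁻¹ * (K+1) - K * ((d:ℝ)^n)⁻¹ = ((d:ℝ)^n)⁻¹ := by ring
    linarith [hd1.1]
  refine ⟨fun z => G' (EscAux.toV z), ?_, ?_, ?_, ?_⟩
  · intro z
    rw [show (fun n : ℕ => ((d:ℝ)^n)⁻¹ * max 0 (Real.log (eucNorm (F^[n] z))))
        = fun n => g n (EscAux.toV z) from funext (hfun z)]
    exact hG' _
  · exact hGcont.comp (PiLp.continuous_toLp _ _)
  · exact fun z => hGnn _
  · intro z
    simp only [Set.mem_setOf_eq]
    constructor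
    · intro h0
      by_contra hnb
      exact absurd h0 (ne_of_gt (hpos_of_unbdd z hnb))
    · exact hzero_of_bdd z
end
end

section
/- Let F : ℂ^N → ℂ^N be a map whose components are polynomials of degree at most d, and let F_h be the map whose components are the degree-d homogeneous parts of the components of F. Then F_h⁻¹{0} = {0} if and only if liminf_{‖z‖→∞} ‖F(z)‖ / ‖z‖^d > 0, where ‖·‖ is the Euclidean norm on ℂ^N. -/
open MvPolynomial Filter Finset

namespace RegAux

variable {N : ℕ}

lemma eucNorm_nonneg (z : Fin N → ℂ) : 0 ≤ eucNorm z := Real.sqrt_nonneg _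

lemma eucNorm_eq_norm (z : Fin N → ℂ) :
    eucNorm z = ‖(WithLp.equiv 2 (Fin N → ℂ)).symm z‖ := by
  rw [EuclideanSpace.norm_eq]
  simp [eucNorm]

lemma eucNorm_eq_zero {z : Fin N → ℂ} : eucNorm z = 0 ↔ z = 0 := by
  rw [eucNorm_eq_norm, norm_eq_zero]
  constructor
  · intro h
    have := congrArg (WithLp.equiv 2 (Fin N → ℂ)) h
    simpa using this
  · rintro rfl; simp

lemma eucNorm_smul (c : ℂ) (z : Fin N → ℂ) :
    eucNorm (c • z) = ‖c‖ * eucNorm z := by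
  rw [eucNorm_eq_norm, eucNorm_eq_norm, WithLp.equiv_symm_apply, WithLp.toLp_smul, norm_smul]

lemma eucNorm_sub_le (x y : Fin N → ℂ) : eucNorm x - eucNorm y ≤ eucNorm (x - y) := by
  rw [eucNorm_eq_norm, eucNorm_eq_norm, eucNorm_eq_norm, WithLp.equiv_symm_apply, WithLp.toLp_sub]
  exact norm_sub_norm_le _ _

lemma continuous_eucNorm : Continuous (eucNorm (N := N)) := by
  have : (eucNorm (N := N)) = fun z => ‖(WithLp.equiv 2 (Fin N → ℂ)).symm z‖ :=
    funext eucNorm_eq_norm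
  rw [this]
  exact continuous_norm.comp (PiLp.continuous_toLp 2 _)

lemma abs_apply_le_eucNorm (z : Fin N → ℂ) (i : Fin N) :
    ‖z i‖ ≤ eucNorm z := by
  rw [eucNorm]
  rw [show ‖z i‖ = Real.sqrt (‖z i‖ ^ 2) by
    rw [Real.sqrt_sq (norm_nonneg _)]]
  apply Real.sqrt_le_sqrt
  exact Finset.single_le_sum (f := fun j => ‖z j‖ ^ 2)
    (fun j _ => sq_nonneg _) (Finset.mem_univ i)

lemma eucNorm_le_sum (z : Fin N → ℂ) : eucNorm z ≤ ∑ i, ‖z i‖ := by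
  rw [eucNorm]
  rw [show (∑ i, ‖z i‖) = Real.sqrt ((∑ i, ‖z i‖) ^ 2) by
    rw [Real.sqrt_sq (Finset.sum_nonneg fun _ _ => norm_nonneg _)]]
  apply Real.sqrt_le_sqrt
  exact Finset.sum_sq_le_sq_sum_of_nonneg fun i _ => norm_nonneg _

/-- Evaluation bound for polynomials of total degree at most `k`. -/
lemma abs_eval_le (Q : MvPolynomial (Fin N) ℂ) (k : ℕ) (hQ : Q.totalDegree ≤ k)
    (z : Fin N → ℂ) (hz : 1 ≤ eucNorm z) :
    ‖eval z Q‖ ≤ (∑ m ∈ Q.support, ‖Q.coeff m‖) * eucNorm z ^ k := by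
  rw [eval_eq']
  calc ‖∑ m ∈ Q.support, Q.coeff m * ∏ i, z i ^ m i‖
      ≤ ∑ m ∈ Q.support, ‖Q.coeff m * ∏ i, z i ^ m i‖ :=
        norm_sum_le _ _
    _ ≤ ∑ m ∈ Q.support, ‖Q.coeff m‖ * eucNorm z ^ k := by
        apply Finset.sum_le_sum
        intro m hm
        rw [norm_mul]
        apply mul_le_mul_of_nonneg_left _ (norm_nonneg _)
        rw [norm_prod]
        calc (∏ i, ‖z i ^ m i‖) ≤ ∏ i, eucNorm z ^ m i := by
              apply Finset.prod_le_prod (fun i _ => norm_nonneg _)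
              intro i _
              rw [norm_pow]
              exact pow_le_pow_left₀ (norm_nonneg _) (abs_apply_le_eucNorm z i) _
          _ = eucNorm z ^ (∑ i, m i) := by
              rw [Finset.prod_pow_eq_pow_sum]
          _ ≤ eucNorm z ^ k := by
              apply pow_le_pow_right₀ hz
              have h1 : (m.sum fun _ e => e) ≤ Q.totalDegree := le_totalDegree hm
              have h2 : (m.sum fun _ e => e) = ∑ i, m i :=
                Finsupp.sum_fintype _ _ (fun _ => rfl)
              omega
    _ = (∑ m ∈ Q.support, ‖Q.coeff m‖) * eucNorm z ^ k := by
        rw [Finset.sum_mul]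

/-- Evaluation of a homogeneous polynomial at a scalar multiple. -/
lemma eval_smul_homog {φ : MvPolynomial (Fin N) ℂ} {n : ℕ} (hφ : φ.IsHomogeneous n)
    (c : ℂ) (z : Fin N → ℂ) : eval (c • z) φ = c ^ n * eval z φ := by
  rw [eval_eq', eval_eq', Finset.mul_sum]
  refine Finset.sum_congr rfl fun m hm => ?_
  have hw : (Finsupp.weight 1) m = n := hφ (Finsupp.mem_support_iff.mp hm)
  have hdeg : ∑ i, m i = n := by
    rw [Finsupp.weight_apply] at hw
    rw [← hw]
    rw [Finsupp.sum_fintype _ _ (fun _ => by simp)]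
    simp
  have : (∏ i, (c • z) i ^ m i) = c ^ n * ∏ i, z i ^ m i := by
    simp only [Pi.smul_apply, smul_eq_mul, mul_pow]
    rw [Finset.prod_mul_distrib, Finset.prod_pow_eq_pow_sum, hdeg]
  rw [this]; ring

/-- Total degree of the non-leading part. -/
lemma totalDegree_sub_homogeneousComponent_le (Q : MvPolynomial (Fin N) ℂ) {d : ℕ}
    (h : Q.totalDegree ≤ d) :
    (Q - homogeneousComponent d Q).totalDegree ≤ d - 1 := by
  rw [totalDegree]
  apply Finset.sup_le
  intro m hm
  have hne : coeff m (Q - homogeneousComponent d Q) ≠ 0 := Finsupp.mem_support_iff.mp hm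
  rw [coeff_sub, coeff_homogeneousComponent] at hne
  have hdeg_eq : m.degree = m.sum fun _ e => e := rfl
  by_cases hmd : m.degree = d
  · simp [hmd] at hne
  · have hQm : coeff m Q ≠ 0 := by
      intro h0; apply hne; simp [hmd, h0]
    have h1 : (m.sum fun _ e => e) ≤ Q.totalDegree :=
      le_totalDegree (Finsupp.mem_support_iff.mpr hQm)
    omega

/-- Eventually in the comap filter. -/
lemma eventually_comap_eucNorm {p : (Fin N → ℂ) → Prop} :
    (∀ᶠ z in comap eucNorm atTop, p z) ↔ ∃ R : ℝ, ∀ z, R ≤ eucNorm z → p z := by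
  constructor
  · intro h
    rw [eventually_comap] at h
    rw [eventually_atTop] at h
    obtain ⟨R, hR⟩ := h
    exact ⟨R, fun z hz => hR (eucNorm z) hz z rfl⟩
  · rintro ⟨R, hR⟩
    have : eucNorm (N := N) ⁻¹' (Set.Ici R) ∈ comap (eucNorm (N := N)) (atTop : Filter ℝ) :=
      preimage_mem_comap (Ici_mem_atTop R)
    filter_upwards [this] with z hz
    exact hR z hz

lemma neBot_comap (hN : 0 < N) : (comap (eucNorm (N := N)) atTop).NeBot := by
  have key : Tendsto (fun t : ℝ => (fun _ => (t : ℂ) : Fin N → ℂ)) atTop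
      (comap eucNorm atTop) := by
    rw [tendsto_comap_iff]
    apply tendsto_atTop_mono' _ _ tendsto_id
    filter_upwards [eventually_ge_atTop (0 : ℝ)] with t ht
    show t ≤ eucNorm (fun _ => (t : ℂ))
    have : eucNorm (fun _ => (t : ℂ) : Fin N → ℂ) = Real.sqrt (N * t ^ 2) := by
      rw [eucNorm]
      congr 1
      rw [Finset.sum_const, Finset.card_univ, Fintype.card_fin, nsmul_eq_mul,
        Complex.norm_real, Real.norm_eq_abs, sq_abs]
    rw [this]
    have h1 : t = Real.sqrt (t ^ 2) := by rw [Real.sqrt_sq ht]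
    nth_rewrite 1 [h1]
    apply Real.sqrt_le_sqrt
    nlinarith [sq_nonneg t, Nat.one_le_cast (α := ℝ) |>.mpr hN]
  exact key.neBot

end RegAux

open RegAux

/-- Characterization of regularity: for a map `F : ℂ^N → ℂ^N` whose components are
polynomials of degree at most `d`, with leading part `F_h` (the degree-`d` homogeneous
parts), `F_h⁻¹{0} = {0}` if and only if `liminf_{‖z‖→∞} ‖F(z)‖/‖z‖^d > 0`. -/
theorem regular_iff_liminf_pos
    (N : ℕ) (hN : 0 < N) (d : ℕ) (hd : 1 ≤ d)
    (P : Fin N → MvPolynomial (Fin N) ℂ)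
    (hdeg : ∀ i, (P i).totalDegree ≤ d)
    (F Fh : (Fin N → ℂ) → (Fin N → ℂ))
    (hF : F = fun z => fun i => MvPolynomial.eval z (P i))
    (hFh : Fh = fun z => fun i =>
        MvPolynomial.eval z (MvPolynomial.homogeneousComponent d (P i))) :
    Fh ⁻¹' {0} = ({0} : Set (Fin N → ℂ))
      ↔ 0 < Filter.liminf (fun z : Fin N → ℂ => eucNorm (F z) / eucNorm z ^ d)
          (Filter.comap eucNorm Filter.atTop) := by
  haveI : (comap (eucNorm (N := N)) atTop).NeBot := neBot_comap hN
  set u : (Fin N → ℂ) → ℝ := fun z => eucNorm (F z) / eucNorm z ^ d with hu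
  -- the remainder polynomials
  set Q : Fin N → MvPolynomial (Fin N) ℂ :=
    fun i => P i - MvPolynomial.homogeneousComponent d (P i) with hQ
  -- remainder constant
  set CG : ℝ := ∑ i, ∑ m ∈ (Q i).support, ‖(Q i).coeff m‖ with hCG
  have hCGnn : 0 ≤ CG :=
    Finset.sum_nonneg fun i _ => Finset.sum_nonneg fun m _ => norm_nonneg _
  -- homogeneity of Fh
  have hhom : ∀ i, (MvPolynomial.homogeneousComponent d (P i)).IsHomogeneous d :=
    fun i => MvPolynomial.homogeneousComponent_isHomogeneous d (P i)
  have hFh_smul : ∀ (c : ℂ) (z : Fin N → ℂ), Fh (c • z) = c ^ d • Fh z := by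
    intro c z
    funext i
    rw [hFh]
    simp only [Pi.smul_apply, smul_eq_mul]
    exact eval_smul_homog (hhom i) c z
  -- remainder bound
  have hrem : ∀ z : Fin N → ℂ, 1 ≤ eucNorm z →
      eucNorm (F z - Fh z) ≤ CG * eucNorm z ^ (d - 1) := by
    intro z hz
    have hFsub : F z - Fh z = fun i => MvPolynomial.eval z (Q i) := by
      funext i
      rw [hF, hFh, hQ]
      simp [map_sub]
    rw [hFsub]
    calc eucNorm (fun i => MvPolynomial.eval z (Q i))
        ≤ ∑ i, ‖MvPolynomial.eval z (Q i)‖ := eucNorm_le_sum _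
      _ ≤ ∑ i, (∑ m ∈ (Q i).support, ‖(Q i).coeff m‖) * eucNorm z ^ (d - 1) := by
          apply Finset.sum_le_sum
          intro i _
          exact abs_eval_le (Q i) (d - 1)
            (totalDegree_sub_homogeneousComponent_le (P i) (hdeg i)) z hz
      _ = CG * eucNorm z ^ (d - 1) := by rw [hCG, Finset.sum_mul]
  constructor
  · -- regular → liminf positive
    intro hreg
    -- minimum on the unit sphere
    have hScompact : IsCompact {z : Fin N → ℂ | eucNorm z = 1} := by
      have h1 : IsCompact (Metric.sphere (0 : EuclideanSpace ℂ (Fin N)) 1) :=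
        isCompact_sphere 0 1
      have h2 : {z : Fin N → ℂ | eucNorm z = 1}
          = (WithLp.equiv 2 (Fin N → ℂ)) '' (Metric.sphere 0 1) := by
        ext z
        simp only [Set.mem_setOf_eq, Set.mem_image]
        constructor
        · intro hz
          refine ⟨(WithLp.equiv 2 (Fin N → ℂ)).symm z, ?_, by simp⟩
          rw [Metric.mem_sphere, dist_zero_right, ← eucNorm_eq_norm, hz]
        · rintro ⟨w, hw, rfl⟩
          rw [Metric.mem_sphere, dist_zero_right] at hw
          rw [eucNorm_eq_norm]
          simpa using hw
      rw [h2]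
      exact h1.image (PiLp.continuous_ofLp 2 _)
    have hSne : ({z : Fin N → ℂ | eucNorm z = 1}).Nonempty := by
      refine ⟨Pi.single ⟨0, hN⟩ 1, ?_⟩
      have hterm : ∀ i : Fin N,
          ‖(Pi.single (⟨0, hN⟩ : Fin N) (1:ℂ) : Fin N → ℂ) i‖ ^ 2
            = if i = ⟨0, hN⟩ then (1:ℝ) else 0 := by
        intro i
        rcases eq_or_ne i ⟨0, hN⟩ with h | h
        · subst h; simp
        · simp [Pi.single_apply, h]
      simp only [Set.mem_setOf_eq, eucNorm]
      rw [Finset.sum_congr rfl (fun i _ => hterm i),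
        Finset.sum_ite_eq' Finset.univ (⟨0, hN⟩ : Fin N) (fun _ => (1:ℝ))]
      simp
    have hcont : Continuous fun z : Fin N → ℂ => eucNorm (Fh z) := by
      apply continuous_eucNorm.comp
      rw [hFh]
      exact continuous_pi fun i => MvPolynomial.continuous_eval _
    obtain ⟨w₀, hw₀S, hw₀min'⟩ :=
      hScompact.exists_isMinOn hSne hcont.continuousOn
    have hw₀min : ∀ w, eucNorm w = 1 → eucNorm (Fh w₀) ≤ eucNorm (Fh w) :=
      fun w hw => hw₀min' hw
    set m : ℝ := eucNorm (Fh w₀) with hm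
    have hmpos : 0 < m := by
      rcases (eucNorm_nonneg (Fh w₀)).lt_or_eq with h | h
      · exact h
      · exfalso
        have hFh0 : Fh w₀ = 0 := eucNorm_eq_zero.mp h.symm
        have : w₀ ∈ Fh ⁻¹' {0} := by simp [hFh0]
        rw [hreg] at this
        simp only [Set.mem_singleton_iff] at this
        rw [this] at hw₀S
        simp only [Set.mem_setOf_eq] at hw₀S
        rw [show (0 : Fin N → ℂ) = ((0:ℂ) • 0 : Fin N → ℂ) by simp] at hw₀S
        rw [eucNorm_smul] at hw₀S
        simp at hw₀S
    -- lower bound for eucNorm (Fh z)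
    have hFh_lower : ∀ z : Fin N → ℂ, z ≠ 0 → m * eucNorm z ^ d ≤ eucNorm (Fh z) := by
      intro z hz
      set t : ℝ := eucNorm z with ht
      have htpos : 0 < t := by
        rcases (eucNorm_nonneg z).lt_or_eq with h | h
        · exact h
        · exact absurd (eucNorm_eq_zero.mp h.symm) hz
      set w : Fin N → ℂ := ((t : ℂ))⁻¹ • z with hw
      have hzw : z = (t : ℂ) • w := by
        rw [hw, smul_inv_smul₀]
        exact_mod_cast htpos.ne'
      have hwS : eucNorm w = 1 := by
        rw [hw, eucNorm_smul]
        rw [norm_inv, Complex.norm_real, Real.norm_eq_abs, abs_of_pos htpos]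
        field_simp
        exact ht.symm
      have h1 : eucNorm (Fh z) = t ^ d * eucNorm (Fh w) := by
        rw [hzw, hFh_smul, eucNorm_smul, norm_pow, Complex.norm_real, Real.norm_eq_abs, abs_of_pos htpos]
      rw [h1, mul_comm m (t ^ d)]
      exact mul_le_mul_of_nonneg_left (hw₀min w hwS) (pow_nonneg htpos.le d)
    -- upper bound for u (for coboundedness)
    set CF : ℝ := ∑ i, ∑ mm ∈ (P i).support, ‖(P i).coeff mm‖ with hCF
    have hupper : ∀ z : Fin N → ℂ, 1 ≤ eucNorm z → u z ≤ CF := by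
      intro z hz
      have h1 : eucNorm (F z) ≤ CF * eucNorm z ^ d := by
        rw [hF]
        calc eucNorm (fun i => MvPolynomial.eval z (P i))
            ≤ ∑ i, ‖MvPolynomial.eval z (P i)‖ := eucNorm_le_sum _
          _ ≤ ∑ i, (∑ mm ∈ (P i).support, ‖(P i).coeff mm‖) * eucNorm z ^ d := by
              apply Finset.sum_le_sum
              intro i _
              exact abs_eval_le (P i) d (hdeg i) z hz
          _ = CF * eucNorm z ^ d := by rw [hCF, Finset.sum_mul]
      simp only [hu]
      have hpow : (0:ℝ) < eucNorm z ^ d := pow_pos (lt_of_lt_of_le one_pos hz) d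
      rw [div_le_iff₀ hpow]
      exact h1
    have hcobdd : (comap (eucNorm (N := N)) atTop).IsCoboundedUnder (· ≥ ·) u := by
      apply Filter.isCoboundedUnder_ge_of_eventually_le _ (x := CF)
      rw [eventually_comap_eucNorm]
      exact ⟨1, hupper⟩
    -- eventual lower bound m/2
    have hev : ∀ᶠ z in comap (eucNorm (N := N)) atTop, m / 2 ≤ u z := by
      rw [eventually_comap_eucNorm]
      refine ⟨max 1 (2 * CG / m), fun z hz => ?_⟩
      have hz1 : 1 ≤ eucNorm z := le_trans (le_max_left _ _) hz
      have hz2 : 2 * CG / m ≤ eucNorm z := le_trans (le_max_right _ _) hz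
      set t : ℝ := eucNorm z with ht
      have htpos : 0 < t := lt_of_lt_of_le one_pos hz1
      have hzne : z ≠ 0 := by
        intro h0
        rw [h0] at ht
        rw [show eucNorm (0 : Fin N → ℂ) = 0 from eucNorm_eq_zero.mpr rfl] at ht
        exact absurd ht.symm (ne_of_lt htpos)
      have hkey : m * t ^ d - CG * t ^ (d - 1) ≤ eucNorm (F z) := by
        have h1 := hFh_lower z hzne
        have h2 := hrem z hz1
        have h3 := eucNorm_sub_le (Fh z) (F z)
        have h4 : eucNorm (Fh z - F z) = eucNorm (F z - Fh z) := by
          rw [show Fh z - F z = -(F z - Fh z) by ring,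
            show -(F z - Fh z) = (-1 : ℂ) • (F z - Fh z) by simp, eucNorm_smul]
          simp
        rw [h4] at h3
        linarith
      have hCGt : CG * t ^ (d - 1) ≤ (m / 2) * t ^ d := by
        have hdd : t ^ d = t * t ^ (d - 1) := by
          conv_lhs => rw [show d = 1 + (d - 1) by omega]
          rw [pow_add, pow_one]
        rw [hdd, ← mul_assoc]
        apply mul_le_mul_of_nonneg_right _ (pow_nonneg htpos.le _)
        rw [div_le_iff₀ hmpos] at hz2
        linarith
      simp only [hu]
      rw [le_div_iff₀ (pow_pos htpos d)]
      calc m / 2 * eucNorm z ^ d = m * t ^ d - (m/2) * t ^ d := by ring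
        _ ≤ m * t ^ d - CG * t ^ (d - 1) := by linarith
        _ ≤ eucNorm (F z) := hkey
    have := Filter.le_liminf_of_le hcobdd hev
    linarith [half_pos hmpos]
  · -- liminf positive → regular
    intro hlim
    apply Set.Subset.antisymm
    · -- Fh z = 0 → z = 0
      intro z₀ hz₀mem
      simp only [Set.mem_preimage, Set.mem_singleton_iff] at hz₀mem
      simp only [Set.mem_singleton_iff]
      by_contra hz₀
      set L : ℝ := Filter.liminf u (comap eucNorm atTop) with hL
      have hbdd : (comap (eucNorm (N := N)) atTop).IsBoundedUnder (· ≥ ·) u :=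
        ⟨0, Filter.eventually_map.2 (Filter.Eventually.of_forall fun z =>
          div_nonneg (eucNorm_nonneg _) (pow_nonneg (eucNorm_nonneg _) _))⟩
      have hev : ∀ᶠ z in comap (eucNorm (N := N)) atTop, L / 2 < u z :=
        Filter.eventually_lt_of_lt_liminf (half_lt_self hlim) hbdd
      rw [eventually_comap_eucNorm] at hev
      obtain ⟨R, hR⟩ := hev
      have ht₀pos : 0 < eucNorm z₀ := by
        rcases (eucNorm_nonneg z₀).lt_or_eq with h | h
        · exact h
        · exact absurd (eucNorm_eq_zero.mp h.symm) hz₀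
      set t₀ : ℝ := eucNorm z₀ with ht₀
      -- choose the radius
      set T : ℝ := max (max R 1) (2 * CG / L + 1) with hT
      have hT1 : 1 ≤ T := le_trans (le_max_right R 1) (le_max_left _ _)
      have hTR : R ≤ T := le_trans (le_max_left R 1) (le_max_left _ _)
      have hTCG : 2 * CG / L + 1 ≤ T := le_max_right _ _
      have hTpos : 0 < T := lt_of_lt_of_le one_pos hT1
      set s : ℝ := T / t₀ with hs
      have hspos : 0 < s := div_pos hTpos ht₀pos
      set z : Fin N → ℂ := ((s : ℝ) : ℂ) • z₀ with hz
      have hzT : eucNorm z = T := by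
        rw [hz, eucNorm_smul, Complex.norm_real, Real.norm_eq_abs, abs_of_pos hspos, hs]
        field_simp
        exact ht₀.symm
      -- Fh z = 0
      have hFhz : Fh z = 0 := by
        rw [hz, hFh_smul]
        rw [hz₀mem]
        simp
      -- so eucNorm (F z) is small
      have hFz : eucNorm (F z) ≤ CG * T ^ (d - 1) := by
        have := hrem z (by rw [hzT]; exact hT1)
        rw [hFhz, sub_zero, hzT] at this
        exact this
      have hu_small : u z ≤ CG / T := by
        simp only [hu]
        rw [hzT]
        rw [div_le_div_iff₀ (pow_pos hTpos d) hTpos]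
        calc eucNorm (F z) * T ≤ CG * T ^ (d - 1) * T := by
              apply mul_le_mul_of_nonneg_right hFz hTpos.le
          _ = CG * T ^ d := by
              rw [mul_assoc, ← pow_succ]
              congr 2
              omega
      have hu_big : L / 2 < u z := hR z (by rw [hzT]; exact hTR)
      have hCGT : CG / T < L / 2 := by
        rw [div_lt_iff₀ hTpos]
        have hL2 : 0 < L / 2 := half_pos hlim
        have : 2 * CG / L ≤ T - 1 := by linarith
        rw [div_le_iff₀ hlim] at this
        nlinarith
      linarith
    · -- 0 ∈ preimage
      intro z hz
      simp only [Set.mem_singleton_iff] at hz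
      subst hz
      simp only [Set.mem_preimage, Set.mem_singleton_iff]
      have : (0 : Fin N → ℂ) = (0 : ℂ) • (0 : Fin N → ℂ) := by simp
      rw [this, hFh_smul]
      rw [zero_pow (by omega : d ≠ 0)]
      simp
end
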